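/- There is an absolute constant c such that for every 0-pebble transducer P with n states, there exists a two-way transducer T with at most c·n states such that ⟦T⟧ = ⟦P⟧. Moreover, if P is reversible then T is reversible. -/

import Mathlib

/-!
Common framework: pebble transducers with equality tests
(following "Reversible Pebble Transducers").
-/

namespace RevPeb

/-- Atomic tests: `headPeb i` is `(h = p_i)`, `pebPeb i j` is `(p_i = p_j)`
(indices are 0-based, pebble `i+1` of the paper). -/
inductive Atom (k : ℕ) : Type where
  | headPeb : Fin k → Atom k
  | pebPeb : Fin k → Fin k → Atom k

/-- Pebble operations (0-based: `drop i`/`lift i` refer to pebble `i+1` of the paper). -/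
inductive PebOp (k : ℕ) : Type where
  | nop : PebOp k
  | drop : Fin k → PebOp k
  | lift : Fin k → PebOp k

/-- A test is a conjunction of literals: an atom together with a polarity. -/
abbrev Test (k : ℕ) : Type := List (Atom k × Bool)

/-- A transition `(q, a, φ, op, q')`; `letter = none` encodes the endmarker `#`. -/
structure PTrans (Q Sg : Type*) (k : ℕ) where
  src : Q
  letter : Option Sg
  test : Test k
  op : PebOp k
  tgt : Q

/-- A `k`-pebble transducer with equality tests (data part).
`dir q` is the polarity of state `q` (which part of `Q_{+1} ⊎ Q_0 ⊎ Q_{-1}` it lies in). -/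
structure PT (Q Sg Gm : Type*) (k : ℕ) where
  dir : Q → SignType
  qinit : Q
  qfin : Q
  δ : Set (PTrans Q Sg k)
  μ : PTrans Q Sg k → List Gm

variable {Q Sg Gm : Type*} {k : ℕ}

/-- Well-formedness: `q_i, q_f ∈ Q_0`, `q_i ≠ q_f`, no transition leaves `q_f`
nor enters `q_i`, and the transition set is finite. -/
def PT.WF (T : PT Q Sg Gm k) : Prop :=
  T.dir T.qinit = 0 ∧ T.dir T.qfin = 0 ∧ T.qinit ≠ T.qfin ∧
  (∀ t ∈ T.δ, t.src ≠ T.qfin ∧ t.tgt ≠ T.qinit) ∧ T.δ.Finite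

/-- Letter of the circular word `#u` at position `h ∈ {0,…,|u|}`;
`none` is the endmarker `#` (at position 0). -/
def letterAt (u : List Sg) (h : ℕ) : Option Sg :=
  if h = 0 then none else u[h-1]?

/-- Satisfaction of an atomic test by a pebble stack and head position. -/
def atomSat (peb : List ℕ) (h : ℕ) : Atom k → Prop
  | .headPeb i => (i : ℕ) < peb.length ∧ peb.getD i 0 = h
  | .pebPeb i j => (i : ℕ) < peb.length ∧ (j : ℕ) < peb.length ∧ peb.getD i 0 = peb.getD j 0

/-- Satisfaction of a test (conjunction of literals). -/
def testSat (peb : List ℕ) (h : ℕ) (φ : Test k) : Prop :=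
  ∀ l ∈ φ, (atomSat peb h l.1 ↔ l.2 = true)

/-- Executability of a pebble operation: `drop i` (pebble `i+1` of the paper) needs
`|peb| = i`, `lift i` needs `|peb| = i+1` and the top pebble at the head. -/
def opEnabled (peb : List ℕ) (h : ℕ) : PebOp k → Prop
  | .nop => True
  | .drop n => peb.length = (n : ℕ)
  | .lift n => peb.length = (n : ℕ) + 1 ∧ peb.getD (n : ℕ) 0 = h

/-- Effect of a pebble operation on the pebble stack. -/
def opApply (peb : List ℕ) (h : ℕ) : PebOp k → List ℕ
  | .nop => peb
  | .drop _ => peb ++ [h]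
  | .lift _ => peb.dropLast

/-- Head movement on the circular word `#u` (`len = |u|`, positions mod `len+1`). -/
def nextHead (len h : ℕ) : SignType → ℕ
  | .pos => (h + 1) % (len + 1)
  | .zero => h
  | .neg => (h + len) % (len + 1)

/-- A configuration `(q, peb, h)`. -/
structure Config (Q : Type*) where
  q : Q
  peb : List ℕ
  h : ℕ

/-- One step of the transducer on input `u` using transition `t`. -/
def PT.StepT (T : PT Q Sg Gm k) (u : List Sg) (t : PTrans Q Sg k) (C C' : Config Q) : Prop :=
  t ∈ T.δ ∧ C.q = t.src ∧ C.h ≤ u.length ∧ C.peb.length ≤ k ∧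
  letterAt u C.h = t.letter ∧
  testSat C.peb C.h t.test ∧ opEnabled C.peb C.h t.op ∧
  C'.q = t.tgt ∧ C'.peb = opApply C.peb C.h t.op ∧
  C'.h = nextHead u.length C.h (T.dir t.tgt)

/-- Runs, accumulating the produced output word. -/
inductive PT.Run (T : PT Q Sg Gm k) (u : List Sg) :
    Config Q → Config Q → List Gm → Prop where
  | refl (C : Config Q) : PT.Run T u C C []
  | step {C C' C'' : Config Q} (t : PTrans Q Sg k) {v : List Gm} :
      T.StepT u t C C' → PT.Run T u C' C'' v → PT.Run T u C C'' (T.μ t ++ v)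

/-- Semantics: pairs `(u,v)` such that some accepting run on `#u` outputs `v`. -/
def PT.Sem (T : PT Q Sg Gm k) : Set (List Sg × List Gm) :=
  {p | T.Run p.1 ⟨T.qinit, [], 0⟩ ⟨T.qfin, [], 0⟩ p.2}

/-- `t` is enabled at configuration `C` (on input `u`). -/
def PT.Enabled (T : PT Q Sg Gm k) (u : List Sg) (t : PTrans Q Sg k) (C : Config Q) : Prop :=
  ∃ C', T.StepT u t C C'

/-- `t` is reverse-enabled at configuration `C'` (on input `u`). -/
def PT.RevEnabled (T : PT Q Sg Gm k) (u : List Sg) (t : PTrans Q Sg k) (C' : Config Q) : Prop :=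
  ∃ C, T.StepT u t C C'

/-- Determinism: two transitions simultaneously enabled at a common configuration coincide. -/
def PT.Deterministic (T : PT Q Sg Gm k) : Prop :=
  ∀ (u : List Sg) (t₁ t₂ : PTrans Q Sg k) (C : Config Q),
    T.Enabled u t₁ C → T.Enabled u t₂ C → t₁ = t₂

/-- Reverse-determinism. -/
def PT.RevDeterministic (T : PT Q Sg Gm k) : Prop :=
  ∀ (u : List Sg) (t₁ t₂ : PTrans Q Sg k) (C' : Config Q),
    T.RevEnabled u t₁ C' → T.RevEnabled u t₂ C' → t₁ = t₂

/-- Reversible = deterministic and reverse-deterministic. -/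
def PT.Reversible (T : PT Q Sg Gm k) : Prop := T.Deterministic ∧ T.RevDeterministic

/-- A basic pebble transducer uses no pebble-pebble equality atoms. -/
def PT.Basic (T : PT Q Sg Gm k) : Prop :=
  ∀ t ∈ T.δ, ∀ l ∈ t.test, ∀ i j : Fin k, l.1 ≠ Atom.pebPeb i j

/-- `T` computes the partial function `f` (encoded with `Option`): `⟦T⟧` is the graph of `f`. -/
def PT.Computes (T : PT Q Sg Gm k) (f : List Sg → Option (List Gm)) : Prop :=
  ∀ u v, (u, v) ∈ T.Sem ↔ f u = some v

end RevPeb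

namespace RevPeb

/-- Letters of the two-way tape alphabet `Σ ∪ {⊢, ⊣}`. -/
inductive TWLetter (Sg : Type*) : Type _ where
  | lend : TWLetter Sg
  | rend : TWLetter Sg
  | letter : Sg → TWLetter Sg

/-- A transition `(q, a, p)` of a two-way transducer. -/
structure TWTrans (Q Sg : Type*) where
  src : Q
  letter : TWLetter Sg
  tgt : Q

/-- A two-way transducer (data part). `fwd q = true` means `q ∈ Q⁺`. -/
structure TW (Q Sg Gm : Type*) where
  fwd : Q → Bool
  qinit : Q
  qfin : Q
  δ : Set (TWTrans Q Sg)
  μ : TWTrans Q Sg → List Gm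

variable {Q Sg Gm : Type*}

/-- Well-formedness of a two-way transducer: `q_i, q_f ∈ Q⁺`, `q_i ≠ q_f`, `q_i` appears
only in transitions `(q_i, ⊢, p)`, `q_f` only in transitions `(q, ⊣, q_f)`, transitions
reading `⊢` have forward targets, transitions reading `⊣` go to `q_f` or to a backward
state, and `δ` is finite. -/
def TW.WF (T : TW Q Sg Gm) : Prop :=
  T.fwd T.qinit = true ∧ T.fwd T.qfin = true ∧ T.qinit ≠ T.qfin ∧
  (∀ t ∈ T.δ,
    (t.src = T.qinit → t.letter = TWLetter.lend) ∧ t.tgt ≠ T.qinit ∧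
    t.src ≠ T.qfin ∧ (t.tgt = T.qfin → t.letter = TWLetter.rend) ∧
    (t.letter = TWLetter.lend → T.fwd t.tgt = true) ∧
    (t.letter = TWLetter.rend → (t.tgt = T.qfin ∨ T.fwd t.tgt = false))) ∧
  T.δ.Finite

/-- The letter of `⊢u⊣` to the right of the in-between position `h ∈ {0,…,|u|+1}`. -/
def rightOf (u : List Sg) (h : ℕ) : Option (TWLetter Sg) :=
  if h = 0 then some TWLetter.lend
  else if h ≤ u.length then (u[h-1]?).map TWLetter.letter
  else if h = u.length + 1 then some TWLetter.rend
  else none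

/-- One step of a two-way transducer; configurations are pairs (state, head position). -/
def TW.StepT (T : TW Q Sg Gm) (u : List Sg) (t : TWTrans Q Sg) (C C' : Q × ℕ) : Prop :=
  t ∈ T.δ ∧ C.1 = t.src ∧ C'.1 = t.tgt ∧
  (if T.fwd t.src = true then
     rightOf u C.2 = some t.letter ∧
     C'.2 = (if T.fwd t.tgt = true then C.2 + 1 else C.2)
   else
     1 ≤ C.2 ∧ rightOf u (C.2 - 1) = some t.letter ∧
     C'.2 = (if T.fwd t.tgt = true then C.2 else C.2 - 1))

/-- Runs of a two-way transducer, accumulating outputs. -/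
inductive TW.Run (T : TW Q Sg Gm) (u : List Sg) :
    Q × ℕ → Q × ℕ → List Gm → Prop where
  | refl (C : Q × ℕ) : TW.Run T u C C []
  | step {C C' C'' : Q × ℕ} (t : TWTrans Q Sg) {v : List Gm} :
      T.StepT u t C C' → TW.Run T u C' C'' v → TW.Run T u C C'' (T.μ t ++ v)

/-- Semantics of a two-way transducer: accepting runs go from `(q_i,0)` to `(q_f,|u|+2)`. -/
def TW.Sem (T : TW Q Sg Gm) : Set (List Sg × List Gm) :=
  {p | T.Run p.1 (T.qinit, 0) (T.qfin, p.1.length + 2) p.2}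

def TW.Enabled (T : TW Q Sg Gm) (u : List Sg) (t : TWTrans Q Sg) (C : Q × ℕ) : Prop :=
  ∃ C', T.StepT u t C C'

def TW.RevEnabled (T : TW Q Sg Gm) (u : List Sg) (t : TWTrans Q Sg) (C' : Q × ℕ) : Prop :=
  ∃ C, T.StepT u t C C'

def TW.Deterministic (T : TW Q Sg Gm) : Prop :=
  ∀ (u : List Sg) (t₁ t₂ : TWTrans Q Sg) (C : Q × ℕ),
    T.Enabled u t₁ C → T.Enabled u t₂ C → t₁ = t₂

def TW.RevDeterministic (T : TW Q Sg Gm) : Prop :=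
  ∀ (u : List Sg) (t₁ t₂ : TWTrans Q Sg) (C' : Q × ℕ),
    T.RevEnabled u t₁ C' → T.RevEnabled u t₂ C' → t₁ = t₂

def TW.Reversible (T : TW Q Sg Gm) : Prop := T.Deterministic ∧ T.RevDeterministic

end RevPeb

namespace RevPeb

section ZeroPeb

variable {Q Sg Gm : Type}

/-! ### Basic facts about 0-pebble transducers -/

lemma atom0_elim (a : Atom 0) : False := by
  cases a with
  | headPeb i => exact i.elim0
  | pebPeb i j => exact i.elim0

lemma test0_eq_nil (l : Test 0) : l = [] := by
  cases l with
  | nil => rfl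
  | cons a _ => exact (atom0_elim a.1).elim

lemma pebop0_eq_nop (o : PebOp 0) : o = PebOp.nop := by
  cases o with
  | nop => rfl
  | drop i => exact i.elim0
  | lift i => exact i.elim0

lemma ptrans0_eta (t : PTrans Q Sg 0) :
    t = ⟨t.src, t.letter, [], PebOp.nop, t.tgt⟩ := by
  obtain ⟨s, a, φ, o, g⟩ := t
  simp [test0_eq_nil φ, pebop0_eq_nop o]

/-! ### letterAt / rightOf -/

/-- embed a pebble letter into the two-way alphabet -/
def twOf : Option Sg → TWLetter Sg
  | none => TWLetter.lend
  | some σ => TWLetter.letter σ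

lemma twOf_ne_rend (a : Option Sg) : twOf a ≠ TWLetter.rend := by
  cases a <;> simp [twOf]

lemma twOf_inj {a b : Option Sg} (h : twOf a = twOf b) : a = b := by
  cases a <;> cases b <;> simp_all [twOf]

lemma rightOf_eq_twOf (u : List Sg) {h : ℕ} (hh : h ≤ u.length) :
    rightOf u h = some (twOf (letterAt u h)) := by
  rcases Nat.eq_zero_or_pos h with h0 | h1
  · subst h0; simp [rightOf, letterAt, twOf]
  · have hne : h ≠ 0 := Nat.pos_iff_ne_zero.mp h1
    have hlt : h - 1 < u.length := by omega
    simp [rightOf, letterAt, hne, hh, List.getElem?_eq_getElem hlt, twOf]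

lemma rightOf_rend (u : List Sg) : rightOf u (u.length + 1) = some TWLetter.rend := by
  simp [rightOf]

lemma rightOf_twOf_inv {u : List Sg} {h : ℕ} {a : Option Sg}
    (he : rightOf u h = some (twOf a)) : h ≤ u.length ∧ letterAt u h = a := by
  have hle : h ≤ u.length := by
    by_contra hgt
    push_neg at hgt
    rcases eq_or_ne h (u.length + 1) with rfl | hne
    · rw [rightOf_rend] at he
      exact twOf_ne_rend a (Option.some.inj he).symm
    · unfold rightOf at he
      rw [if_neg (by omega), if_neg (by omega), if_neg hne] at he
      exact Option.noConfusion rfl (heq_of_eq he)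
  refine ⟨hle, ?_⟩
  rw [rightOf_eq_twOf u hle] at he
  exact twOf_inj (Option.some.inj he)

lemma rightOf_rend_inv {u : List Sg} {h : ℕ}
    (he : rightOf u h = some TWLetter.rend) : h = u.length + 1 := by
  by_contra hne
  rcases le_or_gt h u.length with hle | hgt
  · rw [rightOf_eq_twOf u hle] at he
    exact twOf_ne_rend _ (Option.some.inj he)
  · unfold rightOf at he
    rw [if_neg (by omega), if_neg (by omega), if_neg hne] at he
    exact Option.noConfusion rfl (heq_of_eq he)

lemma letterAt_zero (u : List Sg) : letterAt u 0 = none := by simp [letterAt]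

lemma letterAt_pos {u : List Sg} {h : ℕ} (h1 : 1 ≤ h) (h2 : h ≤ u.length) :
    ∃ σ, letterAt u h = some σ := by
  have hlt : h - 1 < u.length := by omega
  exact ⟨u[h-1], by simp [letterAt, Nat.pos_iff_ne_zero.mp h1, List.getElem?_eq_getElem hlt]⟩

lemma letterAt_none_iff {u : List Sg} {h : ℕ} (h2 : h ≤ u.length) :
    letterAt u h = none ↔ h = 0 := by
  constructor
  · intro he
    by_contra h0
    obtain ⟨σ, hσ⟩ := letterAt_pos (by omega) h2
    rw [hσ] at he; exact Option.noConfusion rfl (heq_of_eq he)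
  · rintro rfl; exact letterAt_zero u

/-! ### nextHead -/

lemma nextHead_le (len h : ℕ) (d : SignType) (hh : h ≤ len) :
    nextHead len h d ≤ len := by
  cases d <;> simp only [nextHead] <;>
    first
      | exact hh
      | exact Nat.le_of_lt_succ (Nat.mod_lt _ (by omega))

lemma nextHead_zero' (len h : ℕ) : nextHead len h SignType.zero = h := rfl

lemma nextHead_pos_lt {len h : ℕ} (hh : h < len) :
    nextHead len h SignType.pos = h + 1 := by
  simp [nextHead]; omega

lemma nextHead_pos_top (len : ℕ) : nextHead len len SignType.pos = 0 := by
  simp [nextHead]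

lemma nextHead_neg_pos {len h : ℕ} (h1 : 1 ≤ h) (h2 : h ≤ len) :
    nextHead len h SignType.neg = h - 1 := by
  have : h + len = (h - 1) + 1 * (len + 1) := by omega
  simp only [nextHead, this, Nat.add_mul_mod_self_right]
  exact Nat.mod_eq_of_lt (by omega)

lemma nextHead_neg_zero (len : ℕ) : nextHead len 0 SignType.neg = len := by
  simp [nextHead]

end ZeroPeb

section ZeroPeb2

variable {Q Sg Gm : Type}

/-! ### generic run lemmas -/

lemma TW.Run.trans {T : TW Q Sg Gm} {u : List Sg} {C C' C'' : Q × ℕ} {v w : List Gm}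
    (h1 : T.Run u C C' v) (h2 : T.Run u C' C'' w) : T.Run u C C'' (v ++ w) := by
  induction h1 with
  | refl => simpa using h2
  | step t hs _ ih => rw [List.append_assoc]; exact TW.Run.step t hs (ih h2)

lemma TW.Run.single {T : TW Q Sg Gm} {u : List Sg} {t : TWTrans Q Sg} {C C' : Q × ℕ}
    (h : T.StepT u t C C') : T.Run u C C' (T.μ t) := by
  simpa using TW.Run.step t h (TW.Run.refl C')

lemma PT.run_from_fin {P : PT Q Sg Gm 0} (hw : P.WF) {u : List Sg} {C C' : Config Q}
    {v : List Gm} (hr : P.Run u C C' v) (hq : C.q = P.qfin) : C = C' ∧ v = [] := by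
  cases hr with
  | refl => exact ⟨rfl, rfl⟩
  | step t hs _ =>
      exact ((hw.2.2.2.1 t hs.1).1 (hs.2.1.symm.trans hq)).elim

/-! ### states of the simulating two-way transducer -/

inductive St (Q : Type) : Type where
  | pos : Q → St Q
  | neg : Q → St Q
  | gS : Q → St Q
  | gB : Q → St Q
  | gV : Q → St Q
  | gY : Q → St Q
  | gF : St Q

/-- forward states -/
def stFwd : St Q → Bool
  | .pos _ => true
  | .neg _ => false
  | .gS _ => false
  | .gB _ => false
  | .gV _ => true
  | .gY _ => true
  | .gF => true

/-- membership of a (canonical) 0-pebble transition -/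
def PT.Mem (P : PT Q Sg Gm 0) (q : Q) (a : Option Sg) (q' : Q) : Prop :=
  (⟨q, a, [], PebOp.nop, q'⟩ : PTrans Q Sg 0) ∈ P.δ

/-- the transitions of the simulating two-way transducer -/
inductive Del (P : PT Q Sg Gm 0) : TWTrans (St Q) Sg → Prop where
  | rPP {q σ q'} : P.Mem q (some σ) q' → P.dir q ≠ .neg → q ≠ P.qinit →
      P.dir q' = .pos → Del P ⟨.pos q, .letter σ, .pos q'⟩
  | rPS {q σ q'} : P.Mem q (some σ) q' → P.dir q ≠ .neg → q ≠ P.qinit →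
      P.dir q' = 0 → q' ≠ P.qfin → Del P ⟨.pos q, .letter σ, .gS q'⟩
  | rPN {q σ q'} : P.Mem q (some σ) q' → P.dir q ≠ .neg → q ≠ P.qinit →
      P.dir q' = .neg → Del P ⟨.pos q, .letter σ, .neg q'⟩
  | rNP {q σ q'} : P.Mem q (some σ) q' → P.dir q = .neg →
      P.dir q' = .pos → Del P ⟨.neg q, .letter σ, .pos q'⟩
  | rNS {q σ q'} : P.Mem q (some σ) q' → P.dir q = .neg →
      P.dir q' = 0 → q' ≠ P.qfin → Del P ⟨.neg q, .letter σ, .gS q'⟩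
  | rNN {q σ q'} : P.Mem q (some σ) q' → P.dir q = .neg →
      P.dir q' = .neg → Del P ⟨.neg q, .letter σ, .neg q'⟩
  | hNP {q q'} : P.Mem q none q' → q ≠ P.qinit →
      P.dir q' = .pos → Del P ⟨.neg q, .lend, .pos q'⟩
  | hNV {q q'} : P.Mem q none q' → q ≠ P.qinit →
      P.dir q' = 0 → q' ≠ P.qfin → Del P ⟨.neg q, .lend, .gV q'⟩
  | hNY {q q'} : P.Mem q none q' → q ≠ P.qinit →
      P.dir q' = .neg → Del P ⟨.neg q, .lend, .gY q'⟩
  | hNF {q} : P.Mem q none P.qfin → q ≠ P.qinit →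
      Del P ⟨.neg q, .lend, .gF⟩
  | hIP {q'} : P.Mem P.qinit none q' →
      P.dir q' = .pos → Del P ⟨.pos P.qinit, .lend, .pos q'⟩
  | hIV {q'} : P.Mem P.qinit none q' →
      P.dir q' = 0 → q' ≠ P.qfin → Del P ⟨.pos P.qinit, .lend, .gV q'⟩
  | hIY {q'} : P.Mem P.qinit none q' →
      P.dir q' = .neg → Del P ⟨.pos P.qinit, .lend, .gY q'⟩
  | hIF : P.Mem P.qinit none P.qfin → Del P ⟨.pos P.qinit, .lend, .gF⟩
  | gPB {q} : P.dir q = .pos → Del P ⟨.pos q, .rend, .gB q⟩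
  | gBB {q} (σ : Sg) : P.dir q = .pos → Del P ⟨.gB q, .letter σ, .gB q⟩
  | gBV {q} : P.dir q = .pos → Del P ⟨.gB q, .lend, .gV q⟩
  | gVN {q} (σ : Sg) : P.dir q ≠ .neg → q ≠ P.qinit → q ≠ P.qfin →
      Del P ⟨.gV q, .letter σ, .neg q⟩
  | gVN' {q} : P.dir q ≠ .neg → q ≠ P.qinit → q ≠ P.qfin →
      Del P ⟨.gV q, .rend, .neg q⟩
  | gYY {q} (σ : Sg) : P.dir q = .neg → Del P ⟨.gY q, .letter σ, .gY q⟩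
  | gYN {q} : P.dir q = .neg → Del P ⟨.gY q, .rend, .neg q⟩
  | gFF (σ : Sg) : Del P ⟨.gF, .letter σ, .gF⟩
  | gFE : Del P ⟨.gF, .rend, .pos P.qfin⟩
  | gSP {q} (σ : Sg) : P.dir q = 0 → q ≠ P.qinit → q ≠ P.qfin →
      Del P ⟨.gS q, .letter σ, .pos q⟩
  | gSP' {q} : P.dir q = 0 → q ≠ P.qinit → q ≠ P.qfin →
      Del P ⟨.gS q, .lend, .pos q⟩

/-- reverse of `twOf` (junk on `rend`) -/
def untw : TWLetter Sg → Option Sg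
  | .lend => none
  | .rend => none
  | .letter σ => some σ

@[simp] lemma untw_twOf (a : Option Sg) : untw (twOf a) = a := by cases a <;> rfl

/-- output function of the simulating transducer -/
def outF (P : PT Q Sg Gm 0) : TWTrans (St Q) Sg → List Gm
  | ⟨.pos q, x, .pos q'⟩ => P.μ ⟨q, untw x, [], .nop, q'⟩
  | ⟨.pos q, x, .neg q'⟩ => P.μ ⟨q, untw x, [], .nop, q'⟩
  | ⟨.pos q, x, .gS q'⟩ => P.μ ⟨q, untw x, [], .nop, q'⟩
  | ⟨.pos q, x, .gV q'⟩ => P.μ ⟨q, untw x, [], .nop, q'⟩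
  | ⟨.pos q, x, .gY q'⟩ => P.μ ⟨q, untw x, [], .nop, q'⟩
  | ⟨.pos q, x, .gF⟩ => P.μ ⟨q, untw x, [], .nop, P.qfin⟩
  | ⟨.neg q, x, .pos q'⟩ => P.μ ⟨q, untw x, [], .nop, q'⟩
  | ⟨.neg q, x, .neg q'⟩ => P.μ ⟨q, untw x, [], .nop, q'⟩
  | ⟨.neg q, x, .gS q'⟩ => P.μ ⟨q, untw x, [], .nop, q'⟩
  | ⟨.neg q, x, .gV q'⟩ => P.μ ⟨q, untw x, [], .nop, q'⟩
  | ⟨.neg q, x, .gY q'⟩ => P.μ ⟨q, untw x, [], .nop, q'⟩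
  | ⟨.neg q, x, .gF⟩ => P.μ ⟨q, untw x, [], .nop, P.qfin⟩
  | _ => []

/-- the simulating two-way transducer -/
def mkTW (P : PT Q Sg Gm 0) : TW (St Q) Sg Gm :=
  ⟨stFwd, St.pos P.qinit, St.pos P.qfin, {t | Del P t}, outF P⟩

end ZeroPeb2

section ZeroPeb3

variable {Q Sg Gm : Type} {P : PT Q Sg Gm 0} {u : List Sg}

/-! ### step builders for `mkTW` -/

lemma stepFF {s x s'} (hd : Del P ⟨s, x, s'⟩) (hfs : stFwd s = true) (hft : stFwd s' = true)
    {h : ℕ} (hx : rightOf u h = some x) :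
    (mkTW P).StepT u ⟨s, x, s'⟩ (s, h) (s', h + 1) := by
  exact ⟨hd, rfl, rfl, by simp [mkTW, hfs, hft, hx]⟩

lemma stepFB {s x s'} (hd : Del P ⟨s, x, s'⟩) (hfs : stFwd s = true) (hft : stFwd s' = false)
    {h : ℕ} (hx : rightOf u h = some x) :
    (mkTW P).StepT u ⟨s, x, s'⟩ (s, h) (s', h) := by
  exact ⟨hd, rfl, rfl, by simp [mkTW, hfs, hft, hx]⟩

lemma stepBB {s x s'} (hd : Del P ⟨s, x, s'⟩) (hfs : stFwd s = false) (hft : stFwd s' = false)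
    {h : ℕ} (hh : 1 ≤ h) (hx : rightOf u (h - 1) = some x) :
    (mkTW P).StepT u ⟨s, x, s'⟩ (s, h) (s', h - 1) := by
  exact ⟨hd, rfl, rfl, by simp [mkTW, hfs, hft, hx, hh]⟩

lemma stepBF {s x s'} (hd : Del P ⟨s, x, s'⟩) (hfs : stFwd s = false) (hft : stFwd s' = true)
    {h : ℕ} (hh : 1 ≤ h) (hx : rightOf u (h - 1) = some x) :
    (mkTW P).StepT u ⟨s, x, s'⟩ (s, h) (s', h) := by
  exact ⟨hd, rfl, rfl, by simp [mkTW, hfs, hft, hx, hh]⟩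

/-! ### gadget runs -/

lemma runVout (hw : P.WF) {q : Q} (hq : P.dir q ≠ SignType.neg) (hqi : q ≠ P.qinit)
    (hqf : q ≠ P.qfin) :
    (mkTW P).Run u (.gV q, 1) (.neg q, 1) [] := by
  rcases Nat.eq_zero_or_pos u.length with h0 | h1
  · have hx : rightOf u 1 = some TWLetter.rend := by
      rw [show (1:ℕ) = u.length + 1 by omega]; exact rightOf_rend u
    have := TW.Run.single (stepFB (Del.gVN' hq hqi hqf) rfl rfl hx)
    simpa [mkTW, outF] using this
  · obtain ⟨σ, hσ⟩ := letterAt_pos (u := u) (le_refl 1) h1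
    have hx : rightOf u 1 = some (TWLetter.letter σ) := by
      rw [rightOf_eq_twOf u h1, hσ]; rfl
    have := TW.Run.single (stepFB (Del.gVN σ hq hqi hqf) rfl rfl hx)
    simpa [mkTW, outF] using this

lemma runBscan (hw : P.WF) {q : Q} (hq : P.dir q = SignType.pos) :
    ∀ m, 1 ≤ m → m ≤ u.length + 1 → (mkTW P).Run u (.gB q, m) (.neg q, 1) [] := by
  have hqi : q ≠ P.qinit := fun h => by rw [h, hw.1] at hq; exact SignType.noConfusion hq
  have hqf : q ≠ P.qfin := fun h => by rw [h, hw.2.1] at hq; exact SignType.noConfusion hq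
  intro m
  induction m with
  | zero => omega
  | succ n ih =>
    intro _ hle
    rcases Nat.eq_zero_or_pos n with rfl | hn
    · have hx : rightOf u 0 = some TWLetter.lend := by simp [rightOf]
      have s1 := TW.Run.single (stepBF (Del.gBV hq) rfl rfl (le_refl 1) hx)
      have s2 := runVout (u := u) hw (by rw [hq]; simp) hqi hqf
      simpa [mkTW, outF] using TW.Run.trans s1 s2
    · obtain ⟨σ, hσ⟩ := letterAt_pos (u := u) hn (by omega)
      have hx : rightOf u (n + 1 - 1) = some (TWLetter.letter σ) := by
        simpa using (by rw [rightOf_eq_twOf u (by omega : n ≤ u.length), hσ]; rfl :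
          rightOf u n = some (TWLetter.letter σ))
      have s1 := TW.Run.single (stepBB (Del.gBB σ hq) rfl rfl (by omega) hx)
      have s2 := ih hn (by omega)
      simpa [mkTW, outF] using TW.Run.trans s1 s2

lemma runYscan (hw : P.WF) {q : Q} (hq : P.dir q = SignType.neg) :
    ∀ d m, m + d = u.length + 1 → 1 ≤ m →
      (mkTW P).Run u (.gY q, m) (.neg q, u.length + 1) [] := by
  intro d
  induction d with
  | zero =>
    intro m hm _
    have : m = u.length + 1 := by omega
    subst this
    have := TW.Run.single (stepFB (Del.gYN hq) rfl rfl (rightOf_rend u))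
    simpa [mkTW, outF] using this
  | succ k ih =>
    intro m hm h1
    obtain ⟨σ, hσ⟩ := letterAt_pos (u := u) h1 (by omega)
    have hx : rightOf u m = some (TWLetter.letter σ) := by
      rw [rightOf_eq_twOf u (by omega), hσ]; rfl
    have s1 := TW.Run.single (stepFF (Del.gYY σ hq) rfl rfl hx)
    have s2 := ih (m + 1) (by omega) (by omega)
    simpa [mkTW, outF] using TW.Run.trans s1 s2

lemma runFscan :
    ∀ d m, m + d = u.length + 1 → 1 ≤ m →
      (mkTW P).Run u (.gF, m) (.pos P.qfin, u.length + 2) [] := by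
  intro d
  induction d with
  | zero =>
    intro m hm _
    have : m = u.length + 1 := by omega
    subst this
    have s : (mkTW P).StepT u ⟨.gF, .rend, .pos P.qfin⟩ (.gF, u.length + 1)
        (.pos P.qfin, u.length + 1 + 1) := stepFF Del.gFE rfl rfl (rightOf_rend u)
    simpa [mkTW, outF] using TW.Run.single s
  | succ k ih =>
    intro m hm h1
    obtain ⟨σ, hσ⟩ := letterAt_pos (u := u) h1 (by omega)
    have hx : rightOf u m = some (TWLetter.letter σ) := by
      rw [rightOf_eq_twOf u (by omega), hσ]; rfl
    have s1 : (mkTW P).StepT u ⟨.gF, .letter σ, .gF⟩ (.gF, m) (.gF, m + 1) :=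
      stepFF (Del.gFF σ) rfl rfl hx
    have s2 := ih (m + 1) (by omega) (by omega)
    simpa [mkTW, outF] using TW.Run.trans (TW.Run.single s1) s2

lemma runSout {q : Q} (hq : P.dir q = 0) (hqi : q ≠ P.qinit) (hqf : q ≠ P.qfin)
    {h : ℕ} (h1 : 1 ≤ h) (h2 : h ≤ u.length) :
    (mkTW P).Run u (.gS q, h) (.pos q, h) [] := by
  have hx : rightOf u (h - 1) = some (twOf (letterAt u (h - 1))) :=
    rightOf_eq_twOf u (by omega)
  rcases hl : letterAt u (h - 1) with _ | σ
  · rw [hl] at hx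
    have := TW.Run.single (stepBF (Del.gSP' hq hqi hqf) rfl rfl h1 hx)
    simpa [mkTW, outF] using this
  · rw [hl] at hx
    have := TW.Run.single (stepBF (Del.gSP σ hq hqi hqf) rfl rfl h1 hx)
    simpa [mkTW, outF] using this

/-! ### the canonical representation of a pebble configuration -/

open Classical in
/-- canonical two-way configuration representing pebble configuration `(q, h)` -/
noncomputable def rep (P : PT Q Sg Gm 0) (q : Q) (h : ℕ) : St Q × ℕ :=
  if q = P.qinit then (.pos P.qinit, 0)
  else if P.dir q = SignType.neg ∨ h = 0 then (.neg q, h + 1) else (.pos q, h)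

lemma rep_qinit : rep P P.qinit 0 = (.pos P.qinit, 0) := by unfold rep; rw [if_pos rfl]

lemma rep_neg {h : ℕ} {q : Q} (hqi : q ≠ P.qinit) (hd : P.dir q = SignType.neg ∨ h = 0) :
    rep P q h = (.neg q, h + 1) := by unfold rep; rw [if_neg hqi, if_pos hd]

lemma rep_pos {h : ℕ} {q : Q} (hqi : q ≠ P.qinit) (hd : P.dir q ≠ SignType.neg) (hh : h ≠ 0) :
    rep P q h = (.pos q, h) := by
  unfold rep; rw [if_neg hqi, if_neg (by rintro (h1 | h2) <;> [exact hd h1; exact hh h2])]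

lemma landPos (hw : P.WF) {q' : Q} (hd : P.dir q' = SignType.pos) (hqi : q' ≠ P.qinit) :
    ∀ m, 1 ≤ m → m ≤ u.length + 1 →
      (mkTW P).Run u (.pos q', m) (rep P q' (m % (u.length + 1))) [] := by
  intro m h1 h2
  rcases eq_or_lt_of_le h2 with rfl | hlt
  · have hmod : (u.length + 1) % (u.length + 1) = 0 := Nat.mod_self _
    rw [hmod, rep_neg hqi (Or.inr rfl)]
    have s1 := TW.Run.single (stepFB (Del.gPB hd) rfl rfl (rightOf_rend u))
    have s2 := runBscan (u := u) hw hd (u.length + 1) (by omega) (by omega)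
    simpa [mkTW, outF] using TW.Run.trans s1 s2
  · have hmod : m % (u.length + 1) = m := Nat.mod_eq_of_lt hlt
    rw [hmod]
    rw [rep_pos hqi (by rw [hd]; simp) (by omega)]
    exact TW.Run.refl _

end ZeroPeb3

section ZeroPeb4

variable {Q Sg Gm : Type} {P : PT Q Sg Gm 0} {u : List Sg}

lemma simStep (hw : P.WF) {q : Q} {a : Option Sg} {q' : Q} {h : ℕ}
    (ht : P.Mem q a q') (hqf : q' ≠ P.qfin) (hh : h ≤ u.length)
    (hl : letterAt u h = a) (hqi : q = P.qinit → h = 0) :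
    (mkTW P).Run u (rep P q h) (rep P q' (nextHead u.length h (P.dir q')))
      (P.μ ⟨q, a, [], PebOp.nop, q'⟩) := by
  have hq'i : q' ≠ P.qinit := (hw.2.2.2.1 _ ht).2
  rcases a with _ | σ
  · have h0 : h = 0 := (letterAt_none_iff hh).mp hl
    subst h0
    have hx : rightOf u 0 = some TWLetter.lend := by simp [rightOf]
    rcases eq_or_ne q P.qinit with rfl | hqn
    · rw [rep_qinit]
      cases hd : P.dir q' with
      | pos =>
          have s1 := TW.Run.single (stepFF (Del.hIP ht hd) rfl rfl hx)
          have s2 := landPos (u := u) hw hd hq'i 1 (by omega) (by omega)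
          rw [show nextHead u.length 0 SignType.pos = 1 % (u.length + 1) from rfl]
          simpa [mkTW, outF, untw] using TW.Run.trans s1 s2
      | zero =>
          have s1 := TW.Run.single (stepFF (Del.hIV ht hd hqf) rfl rfl hx)
          have s2 := runVout (u := u) hw (by rw [hd]; simp) hq'i hqf
          rw [nextHead_zero', rep_neg hq'i (Or.inr rfl)]
          simpa [mkTW, outF, untw] using TW.Run.trans s1 s2
      | neg =>
          have s1 := TW.Run.single (stepFF (Del.hIY ht hd) rfl rfl hx)
          have s2 := runYscan (u := u) hw hd u.length 1 (by omega) (by omega)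
          rw [nextHead_neg_zero, rep_neg hq'i (Or.inl hd)]
          simpa [mkTW, outF, untw] using TW.Run.trans s1 s2
    · rw [rep_neg hqn (Or.inr rfl)]
      cases hd : P.dir q' with
      | pos =>
          have s1 := TW.Run.single (stepBF (Del.hNP ht hqn hd) rfl rfl (le_refl 1) hx)
          have s2 := landPos (u := u) hw hd hq'i 1 (by omega) (by omega)
          rw [show nextHead u.length 0 SignType.pos = 1 % (u.length + 1) from rfl]
          simpa [mkTW, outF, untw] using TW.Run.trans s1 s2
      | zero =>
          have s1 := TW.Run.single (stepBF (Del.hNV ht hqn hd hqf) rfl rfl (le_refl 1) hx)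
          have s2 := runVout (u := u) hw (by rw [hd]; simp) hq'i hqf
          rw [nextHead_zero', rep_neg hq'i (Or.inr rfl)]
          simpa [mkTW, outF, untw] using TW.Run.trans s1 s2
      | neg =>
          have s1 := TW.Run.single (stepBF (Del.hNY ht hqn hd) rfl rfl (le_refl 1) hx)
          have s2 := runYscan (u := u) hw hd u.length 1 (by omega) (by omega)
          rw [nextHead_neg_zero, rep_neg hq'i (Or.inl hd)]
          simpa [mkTW, outF, untw] using TW.Run.trans s1 s2
  · have h1 : 1 ≤ h := by
      rcases Nat.eq_zero_or_pos h with rfl | h1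
      · rw [letterAt_zero] at hl; exact Option.noConfusion rfl (heq_of_eq hl)
      · exact h1
    have hqn : q ≠ P.qinit := fun he => by have := hqi he; omega
    have hx : rightOf u h = some (TWLetter.letter σ) := by
      rw [rightOf_eq_twOf u hh, hl]; rfl
    rcases eq_or_ne (P.dir q) SignType.neg with hdq | hdq
    · rw [rep_neg hqn (Or.inl hdq)]
      have hx' : rightOf u (h + 1 - 1) = some (TWLetter.letter σ) := by simpa using hx
      cases hd : P.dir q' with
      | pos =>
          have s1 := TW.Run.single (stepBF (Del.rNP ht hdq hd) rfl rfl (by omega) hx')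
          have s2 := landPos (u := u) hw hd hq'i (h + 1) (by omega) (by omega)
          rw [show nextHead u.length h SignType.pos = (h + 1) % (u.length + 1) from rfl]
          simpa [mkTW, outF, untw] using TW.Run.trans s1 s2
      | zero =>
          have s1 := TW.Run.single (stepBB (Del.rNS ht hdq hd hqf) rfl rfl (by omega) hx')
          simp only [Nat.add_sub_cancel] at s1
          have s2 := runSout (u := u) hd hq'i hqf h1 hh
          rw [nextHead_zero', rep_pos hq'i (by rw [hd]; simp) (by omega)]
          simpa [mkTW, outF, untw] using TW.Run.trans s1 s2
      | neg =>
          have s1 := TW.Run.single (stepBB (Del.rNN ht hdq hd) rfl rfl (by omega) hx')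
          simp only [Nat.add_sub_cancel] at s1
          rw [nextHead_neg_pos h1 hh, rep_neg hq'i (Or.inl hd),
            show h - 1 + 1 = h by omega]
          simpa [mkTW, outF, untw] using s1
    · rw [rep_pos hqn hdq (by omega)]
      cases hd : P.dir q' with
      | pos =>
          have s1 := TW.Run.single (stepFF (Del.rPP ht hdq hqn hd) rfl rfl hx)
          have s2 := landPos (u := u) hw hd hq'i (h + 1) (by omega) (by omega)
          rw [show nextHead u.length h SignType.pos = (h + 1) % (u.length + 1) from rfl]
          simpa [mkTW, outF, untw] using TW.Run.trans s1 s2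
      | zero =>
          have s1 := TW.Run.single (stepFB (Del.rPS ht hdq hqn hd hqf) rfl rfl hx)
          have s2 := runSout (u := u) hd hq'i hqf h1 hh
          rw [nextHead_zero', rep_pos hq'i (by rw [hd]; simp) (by omega)]
          simpa [mkTW, outF, untw] using TW.Run.trans s1 s2
      | neg =>
          have s1 := TW.Run.single (stepFB (Del.rPN ht hdq hqn hd) rfl rfl hx)
          rw [nextHead_neg_pos h1 hh, rep_neg hq'i (Or.inl hd),
            show h - 1 + 1 = h by omega]
          simpa [mkTW, outF, untw] using s1

lemma simFinal (hw : P.WF) {q : Q} (ht : P.Mem q none P.qfin) :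
    (mkTW P).Run u (rep P q 0) (.pos P.qfin, u.length + 2)
      (P.μ ⟨q, none, [], PebOp.nop, P.qfin⟩) := by
  have hx : rightOf u 0 = some TWLetter.lend := by simp [rightOf]
  rcases eq_or_ne q P.qinit with rfl | hqn
  · rw [rep_qinit]
    have s1 := TW.Run.single (stepFF (Del.hIF ht) rfl rfl hx)
    have s2 := runFscan (u := u) (P := P) u.length 1 (by omega) (by omega)
    simpa [mkTW, outF, untw] using TW.Run.trans s1 s2
  · rw [rep_neg hqn (Or.inr rfl)]
    have s1 := TW.Run.single (stepBF (Del.hNF ht hqn) rfl rfl (le_refl 1) hx)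
    have s2 := runFscan (u := u) (P := P) u.length 1 (by omega) (by omega)
    simpa [mkTW, outF, untw] using TW.Run.trans s1 s2

lemma fwdRun (hw : P.WF) {v : List Gm} {C D : Config Q}
    (hr : P.Run u C D v) :
    D = ⟨P.qfin, [], 0⟩ → C.peb = [] → C.h ≤ u.length → C.q ≠ P.qfin →
    (C.q = P.qinit → C.h = 0) →
    (mkTW P).Run u (rep P C.q C.h) (.pos P.qfin, u.length + 2) v := by
  induction hr with
  | refl C =>
      intro hD _ _ hq _
      exact absurd (by rw [hD]) hq
  | @step C1 C2 C3 t w hs hrest ih =>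
      intro hD hpeb hh hq hqi
      obtain ⟨m1, m2, m3, m4, m5, m6, m7, m8, m9, m10⟩ := hs
      have hMem : P.Mem t.src t.letter t.tgt := ptrans0_eta t ▸ m1
      have hμ : P.μ t = P.μ ⟨t.src, t.letter, [], PebOp.nop, t.tgt⟩ := by
        rw [← ptrans0_eta t]
      have hpeb' : C2.peb = [] := by
        rw [m9, pebop0_eq_nop t.op]; exact hpeb
      rw [← m2] at hMem
      rcases eq_or_ne t.tgt P.qfin with hfin | hfin
      · subst hD
        obtain ⟨hC', hw0⟩ := PT.run_from_fin hw hrest (by rw [m8, hfin])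
        have hh0 : C2.h = 0 := by rw [hC']
        have hch : C1.h = 0 := by
          rw [m10, hfin, hw.2.1] at hh0
          simpa [nextHead] using hh0
        have hlet : t.letter = none := by rw [← m5, hch, letterAt_zero]
        rw [hw0, List.append_nil, hμ, hch, hlet, hfin, ← m2]
        rw [hlet, hfin] at hMem
        exact simFinal hw hMem
      · have hstep := simStep hw hMem hfin hh m5 hqi
        have ihr := ih hD hpeb' (by rw [m10]; exact nextHead_le _ _ _ hh)
          (by rw [m8]; exact hfin)
          (fun he => absurd (m8.symm.trans he) (hw.2.2.2.1 t m1).2)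
        rw [m8, m10] at ihr
        rw [hμ, ← m2]
        exact TW.Run.trans hstep ihr

end ZeroPeb4

section ZeroPeb5

variable {Q Sg Gm : Type} {P : PT Q Sg Gm 0} {u : List Sg}

lemma rightOf_none {h : ℕ} (hh : u.length + 1 < h) : rightOf u h = none := by
  unfold rightOf
  rw [if_neg (by omega), if_neg (by omega), if_neg (by omega)]

lemma rightOf_lend_inv {h : ℕ} (he : rightOf u h = some TWLetter.lend) : h = 0 := by
  have h2 := rightOf_twOf_inv (a := (none : Option Sg)) he
  exact (letterAt_none_iff h2.1).mp h2.2

lemma rightOf_letter_inv {h : ℕ} {σ : Sg} (he : rightOf u h = some (TWLetter.letter σ)) :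
    1 ≤ h ∧ h ≤ u.length ∧ letterAt u h = some σ := by
  have h2 := rightOf_twOf_inv (a := some σ) he
  refine ⟨?_, h2.1, h2.2⟩
  by_contra h0
  have : h = 0 := by omega
  rw [this, letterAt_zero] at h2
  exact Option.noConfusion rfl (heq_of_eq h2.2)

lemma mkPStep {q : Q} {a : Option Sg} {q' : Q} (hm : P.Mem q a q') {h h' : ℕ}
    (hh : h ≤ u.length) (hl : letterAt u h = a)
    (hnext : h' = nextHead u.length h (P.dir q')) :
    P.StepT u ⟨q, a, [], PebOp.nop, q'⟩ ⟨q, [], h⟩ ⟨q', [], h'⟩ :=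
  ⟨hm, rfl, hh, by simp, hl, by intro l hl; exact (atom0_elim l.1).elim, trivial, rfl, rfl, hnext⟩

/-- correspondence between two-way and pebble configurations -/
inductive Corr (P : PT Q Sg Gm 0) (u : List Sg) : St Q × ℕ → Config Q → Prop where
  | cP {q h} : h ≤ u.length → Corr P u (.pos q, h) ⟨q, [], h⟩
  | cP' {q} : Corr P u (.pos q, u.length + 1) ⟨q, [], 0⟩
  | cN {q h} : 1 ≤ h → h ≤ u.length + 1 → Corr P u (.neg q, h) ⟨q, [], h - 1⟩
  | cS {q h} : 1 ≤ h → h ≤ u.length → Corr P u (.gS q, h) ⟨q, [], h⟩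
  | cB {q h} : 1 ≤ h → h ≤ u.length + 1 → Corr P u (.gB q, h) ⟨q, [], 0⟩
  | cV {q} : Corr P u (.gV q, 1) ⟨q, [], 0⟩
  | cY {q h} : 1 ≤ h → h ≤ u.length + 1 → Corr P u (.gY q, h) ⟨q, [], u.length⟩
  | cF {h} : 1 ≤ h → h ≤ u.length + 1 → Corr P u (.gF, h) ⟨P.qfin, [], 0⟩
  | cFin : Corr P u (.pos P.qfin, u.length + 2) ⟨P.qfin, [], 0⟩

lemma corrPos (q' : Q) {m : ℕ} (h1 : 1 ≤ m) (h2 : m ≤ u.length + 1) :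
    Corr P u (.pos q', m) ⟨q', [], m % (u.length + 1)⟩ := by
  rcases eq_or_lt_of_le h2 with rfl | hlt
  · rw [Nat.mod_self]; exact Corr.cP'
  · rw [Nat.mod_eq_of_lt hlt]; exact Corr.cP (by omega)

lemma corr_pos_inv {q : Q} {p : ℕ} {D : Config Q} (hc : Corr P u (.pos q, p) D) :
    (p ≤ u.length ∧ D = ⟨q, [], p⟩) ∨ (p = u.length + 1 ∧ D = ⟨q, [], 0⟩) ∨
    (q = P.qfin ∧ p = u.length + 2 ∧ D = ⟨P.qfin, [], 0⟩) := by
  cases hc with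
  | cP h => exact Or.inl ⟨h, rfl⟩
  | cP' => exact Or.inr (Or.inl ⟨rfl, rfl⟩)
  | cFin => exact Or.inr (Or.inr ⟨rfl, rfl, rfl⟩)

lemma corr_neg_inv {q : Q} {p : ℕ} {D : Config Q} (hc : Corr P u (.neg q, p) D) :
    1 ≤ p ∧ p ≤ u.length + 1 ∧ D = ⟨q, [], p - 1⟩ := by
  cases hc with
  | cN h1 h2 => exact ⟨h1, h2, rfl⟩

lemma corr_S_inv {q : Q} {p : ℕ} {D : Config Q} (hc : Corr P u (.gS q, p) D) :
    1 ≤ p ∧ p ≤ u.length ∧ D = ⟨q, [], p⟩ := by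
  cases hc with
  | cS h1 h2 => exact ⟨h1, h2, rfl⟩

lemma corr_B_inv {q : Q} {p : ℕ} {D : Config Q} (hc : Corr P u (.gB q, p) D) :
    1 ≤ p ∧ p ≤ u.length + 1 ∧ D = ⟨q, [], 0⟩ := by
  cases hc with
  | cB h1 h2 => exact ⟨h1, h2, rfl⟩

lemma corr_V_inv {q : Q} {p : ℕ} {D : Config Q} (hc : Corr P u (.gV q, p) D) :
    p = 1 ∧ D = ⟨q, [], 0⟩ := by
  cases hc with
  | cV => exact ⟨rfl, rfl⟩

lemma corr_Y_inv {q : Q} {p : ℕ} {D : Config Q} (hc : Corr P u (.gY q, p) D) :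
    1 ≤ p ∧ p ≤ u.length + 1 ∧ D = ⟨q, [], u.length⟩ := by
  cases hc with
  | cY h1 h2 => exact ⟨h1, h2, rfl⟩

lemma corr_F_inv {p : ℕ} {D : Config Q} (hc : Corr P u (.gF, p) D) :
    1 ≤ p ∧ p ≤ u.length + 1 ∧ D = ⟨P.qfin, [], 0⟩ := by
  cases hc with
  | cF h1 h2 => exact ⟨h1, h2, rfl⟩

lemma bwdStep (hw : P.WF) {t' : TWTrans (St Q) Sg} {C C' : St Q × ℕ} {D : Config Q}
    (hs : (mkTW P).StepT u t' C C') (hc : Corr P u C D) :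
    ∃ D', Corr P u C' D' ∧
      ((∃ tp, P.StepT u tp D D' ∧ P.μ tp = outF P t') ∨ (D' = D ∧ outF P t' = [])) := by
  obtain ⟨c1, p⟩ := C
  obtain ⟨c1', p'⟩ := C'
  obtain ⟨hdel, hsrc, htgt, hrest⟩ := hs
  have hdel' : Del P t' := hdel
  dsimp only at hsrc htgt
  cases hdel' with
  | @rPP q σ q' hm hdq hqi hd =>
      subst hsrc htgt
      simp [mkTW, stFwd] at hrest
      obtain ⟨hx, hp'⟩ := hrest
      subst hp'
      rcases corr_pos_inv hc with ⟨hple, rfl⟩ | ⟨hpe, rfl⟩ | ⟨hqf2, hpe, rfl⟩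
      · obtain ⟨h1, h2, hlet⟩ := rightOf_letter_inv hx
        exact ⟨⟨q', [], (p + 1) % (u.length + 1)⟩, corrPos q' (by omega) (by omega),
          Or.inl ⟨_, mkPStep hm h2 hlet (by rw [hd]; rfl), by simp [outF, untw]⟩⟩
      · rw [hpe, rightOf_rend] at hx; simp at hx
      · rw [hpe, rightOf_none (by omega)] at hx; exact Option.noConfusion rfl (heq_of_eq hx)
  | @rPS q σ q' hm hdq hqi hd hqf =>
      subst hsrc htgt
      simp [mkTW, stFwd] at hrest
      obtain ⟨hx, hp'⟩ := hrest
      subst hp'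
      rcases corr_pos_inv hc with ⟨hple, rfl⟩ | ⟨hpe, rfl⟩ | ⟨hqf2, hpe, rfl⟩
      · obtain ⟨h1, h2, hlet⟩ := rightOf_letter_inv hx
        exact ⟨⟨q', [], p'⟩, Corr.cS h1 h2,
          Or.inl ⟨_, mkPStep hm h2 hlet (by rw [hd]; rfl), by simp [outF, untw]⟩⟩
      · rw [hpe, rightOf_rend] at hx; simp at hx
      · rw [hpe, rightOf_none (by omega)] at hx; exact Option.noConfusion rfl (heq_of_eq hx)
  | @rPN q σ q' hm hdq hqi hd =>
      subst hsrc htgt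
      simp [mkTW, stFwd] at hrest
      obtain ⟨hx, hp'⟩ := hrest
      subst hp'
      rcases corr_pos_inv hc with ⟨hple, rfl⟩ | ⟨hpe, rfl⟩ | ⟨hqf2, hpe, rfl⟩
      · obtain ⟨h1, h2, hlet⟩ := rightOf_letter_inv hx
        exact ⟨⟨q', [], p' - 1⟩, Corr.cN h1 (by omega),
          Or.inl ⟨_, mkPStep hm h2 hlet (by rw [hd, nextHead_neg_pos h1 h2]),
            by simp [outF, untw]⟩⟩
      · rw [hpe, rightOf_rend] at hx; simp at hx
      · rw [hpe, rightOf_none (by omega)] at hx; exact Option.noConfusion rfl (heq_of_eq hx)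
  | @rNP q σ q' hm hdq hd =>
      subst hsrc htgt
      simp [mkTW, stFwd] at hrest
      obtain ⟨hp1, hx, hp'⟩ := hrest
      subst hp'
      obtain ⟨hn1, hn2, rfl⟩ := corr_neg_inv hc
      obtain ⟨h1, h2, hlet⟩ := rightOf_letter_inv hx
      refine ⟨⟨q', [], p' % (u.length + 1)⟩, corrPos q' (by omega) (by omega),
        Or.inl ⟨_, mkPStep hm h2 hlet ?_, by simp [outF, untw]⟩⟩
      rw [hd, show nextHead u.length (p' - 1) SignType.pos
        = (p' - 1 + 1) % (u.length + 1) from rfl, show p' - 1 + 1 = p' by omega]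
  | @rNS q σ q' hm hdq hd hqf =>
      subst hsrc htgt
      simp [mkTW, stFwd] at hrest
      obtain ⟨hp1, hx, hp'⟩ := hrest
      subst hp'
      obtain ⟨hn1, hn2, rfl⟩ := corr_neg_inv hc
      obtain ⟨h1, h2, hlet⟩ := rightOf_letter_inv hx
      exact ⟨⟨q', [], p - 1⟩, Corr.cS h1 h2,
        Or.inl ⟨_, mkPStep hm h2 hlet (by rw [hd]; rfl), by simp [outF, untw]⟩⟩
  | @rNN q σ q' hm hdq hd =>
      subst hsrc htgt
      simp [mkTW, stFwd] at hrest
      obtain ⟨hp1, hx, hp'⟩ := hrest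
      subst hp'
      obtain ⟨hn1, hn2, rfl⟩ := corr_neg_inv hc
      obtain ⟨h1, h2, hlet⟩ := rightOf_letter_inv hx
      exact ⟨⟨q', [], p - 1 - 1⟩, Corr.cN (by omega) (by omega),
        Or.inl ⟨_, mkPStep hm h2 hlet (by rw [hd, nextHead_neg_pos h1 h2]),
          by simp [outF, untw]⟩⟩
  | @hNP q q' hm hqi hd =>
      subst hsrc htgt
      simp [mkTW, stFwd] at hrest
      obtain ⟨hp1, hx, hp'⟩ := hrest
      subst hp'
      obtain ⟨hn1, hn2, rfl⟩ := corr_neg_inv hc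
      have hp0 : p' - 1 = 0 := rightOf_lend_inv hx
      have hpp : p' = 1 := by omega
      subst hpp
      exact ⟨⟨q', [], 1 % (u.length + 1)⟩, corrPos q' (by omega) (by omega),
        Or.inl ⟨_, mkPStep hm (by omega) (letterAt_zero u) (by rw [hd]; rfl),
          by simp [outF, untw]⟩⟩
  | @hNV q q' hm hqi hd hqf =>
      subst hsrc htgt
      simp [mkTW, stFwd] at hrest
      obtain ⟨hp1, hx, hp'⟩ := hrest
      subst hp'
      obtain ⟨hn1, hn2, rfl⟩ := corr_neg_inv hc
      have hp0 : p' - 1 = 0 := rightOf_lend_inv hx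
      have hpp : p' = 1 := by omega
      subst hpp
      exact ⟨⟨q', [], 0⟩, Corr.cV,
        Or.inl ⟨_, mkPStep hm (by omega) (letterAt_zero u) (by rw [hd]; rfl),
          by simp [outF, untw]⟩⟩
  | @hNY q q' hm hqi hd =>
      subst hsrc htgt
      simp [mkTW, stFwd] at hrest
      obtain ⟨hp1, hx, hp'⟩ := hrest
      subst hp'
      obtain ⟨hn1, hn2, rfl⟩ := corr_neg_inv hc
      have hp0 : p' - 1 = 0 := rightOf_lend_inv hx
      have hpp : p' = 1 := by omega
      subst hpp
      exact ⟨⟨q', [], u.length⟩, Corr.cY (by omega) (by omega),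
        Or.inl ⟨_, mkPStep hm (by omega) (letterAt_zero u)
          (by rw [hd, nextHead_neg_zero]), by simp [outF, untw]⟩⟩
  | @hNF q hm hqi =>
      subst hsrc htgt
      simp [mkTW, stFwd] at hrest
      obtain ⟨hp1, hx, hp'⟩ := hrest
      subst hp'
      obtain ⟨hn1, hn2, rfl⟩ := corr_neg_inv hc
      have hp0 : p' - 1 = 0 := rightOf_lend_inv hx
      have hpp : p' = 1 := by omega
      subst hpp
      exact ⟨⟨P.qfin, [], 0⟩, Corr.cF (by omega) (by omega),
        Or.inl ⟨_, mkPStep hm (by omega) (letterAt_zero u)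
          (by rw [hw.2.1]; rfl), by simp [outF, untw]⟩⟩
  | @hIP q' hm hd =>
      subst hsrc htgt
      simp [mkTW, stFwd] at hrest
      obtain ⟨hx, hp'⟩ := hrest
      subst hp'
      have hp0 : p = 0 := rightOf_lend_inv hx
      rcases corr_pos_inv hc with ⟨hple, rfl⟩ | ⟨hpe, rfl⟩ | ⟨hqf2, hpe, rfl⟩
      · subst hp0
        exact ⟨⟨q', [], 1 % (u.length + 1)⟩, corrPos q' (by omega) (by omega),
          Or.inl ⟨_, mkPStep hm (by omega) (letterAt_zero u) (by rw [hd]; rfl),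
            by simp [outF, untw]⟩⟩
      · omega
      · omega
  | @hIV q' hm hd hqf =>
      subst hsrc htgt
      simp [mkTW, stFwd] at hrest
      obtain ⟨hx, hp'⟩ := hrest
      subst hp'
      have hp0 : p = 0 := rightOf_lend_inv hx
      rcases corr_pos_inv hc with ⟨hple, rfl⟩ | ⟨hpe, rfl⟩ | ⟨hqf2, hpe, rfl⟩
      · subst hp0
        exact ⟨⟨q', [], 0⟩, Corr.cV,
          Or.inl ⟨_, mkPStep hm (by omega) (letterAt_zero u) (by rw [hd]; rfl),
            by simp [outF, untw]⟩⟩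
      · omega
      · omega
  | @hIY q' hm hd =>
      subst hsrc htgt
      simp [mkTW, stFwd] at hrest
      obtain ⟨hx, hp'⟩ := hrest
      subst hp'
      have hp0 : p = 0 := rightOf_lend_inv hx
      rcases corr_pos_inv hc with ⟨hple, rfl⟩ | ⟨hpe, rfl⟩ | ⟨hqf2, hpe, rfl⟩
      · subst hp0
        exact ⟨⟨q', [], u.length⟩, Corr.cY (by omega) (by omega),
          Or.inl ⟨_, mkPStep hm (by omega) (letterAt_zero u)
            (by rw [hd, nextHead_neg_zero]), by simp [outF, untw]⟩⟩
      · omega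
      · omega
  | hIF hm =>
      subst hsrc htgt
      simp [mkTW, stFwd] at hrest
      obtain ⟨hx, hp'⟩ := hrest
      subst hp'
      have hp0 : p = 0 := rightOf_lend_inv hx
      rcases corr_pos_inv hc with ⟨hple, rfl⟩ | ⟨hpe, rfl⟩ | ⟨hqf2, hpe, rfl⟩
      · subst hp0
        exact ⟨⟨P.qfin, [], 0⟩, Corr.cF (by omega) (by omega),
          Or.inl ⟨_, mkPStep hm (by omega) (letterAt_zero u) (by rw [hw.2.1]; rfl),
            by simp [outF, untw]⟩⟩
      · omega
      · omega
  | @gPB q hd =>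
      subst hsrc htgt
      simp [mkTW, stFwd] at hrest
      obtain ⟨hx, hp'⟩ := hrest
      subst hp'
      rcases corr_pos_inv hc with ⟨hple, rfl⟩ | ⟨hpe, rfl⟩ | ⟨hqf2, hpe, rfl⟩
      · have := rightOf_rend_inv hx
        omega
      · subst hpe
        exact ⟨⟨q, [], 0⟩, Corr.cB (by omega) (by omega), Or.inr ⟨rfl, by simp [outF]⟩⟩
      · rw [hpe, rightOf_none (by omega)] at hx; exact Option.noConfusion rfl (heq_of_eq hx)
  | @gBB q σ hd =>
      subst hsrc htgt
      simp [mkTW, stFwd] at hrest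
      obtain ⟨hp1, hx, hp'⟩ := hrest
      subst hp'
      obtain ⟨hb1, hb2, rfl⟩ := corr_B_inv hc
      obtain ⟨h1, h2, _⟩ := rightOf_letter_inv hx
      exact ⟨⟨q, [], 0⟩, Corr.cB (by omega) (by omega), Or.inr ⟨rfl, by simp [outF]⟩⟩
  | @gBV q hd =>
      subst hsrc htgt
      simp [mkTW, stFwd] at hrest
      obtain ⟨hp1, hx, hp'⟩ := hrest
      subst hp'
      obtain ⟨hb1, hb2, rfl⟩ := corr_B_inv hc
      have hp0 : p' - 1 = 0 := rightOf_lend_inv hx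
      have hpp : p' = 1 := by omega
      subst hpp
      exact ⟨⟨q, [], 0⟩, Corr.cV, Or.inr ⟨rfl, by simp [outF]⟩⟩
  | @gVN q σ hd hqi hqf =>
      subst hsrc htgt
      simp [mkTW, stFwd] at hrest
      obtain ⟨hx, hp'⟩ := hrest
      subst hp'
      obtain ⟨hpv, rfl⟩ := corr_V_inv hc
      subst hpv
      exact ⟨⟨q, [], 0⟩, Corr.cN (by omega) (by omega), Or.inr ⟨rfl, by simp [outF]⟩⟩
  | @gVN' q hd hqi hqf =>
      subst hsrc htgt
      simp [mkTW, stFwd] at hrest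
      obtain ⟨hx, hp'⟩ := hrest
      subst hp'
      obtain ⟨hpv, rfl⟩ := corr_V_inv hc
      subst hpv
      exact ⟨⟨q, [], 0⟩, Corr.cN (by omega) (by omega), Or.inr ⟨rfl, by simp [outF]⟩⟩
  | @gYY q σ hd =>
      subst hsrc htgt
      simp [mkTW, stFwd] at hrest
      obtain ⟨hx, hp'⟩ := hrest
      subst hp'
      obtain ⟨hy1, hy2, rfl⟩ := corr_Y_inv hc
      obtain ⟨h1, h2, _⟩ := rightOf_letter_inv hx
      exact ⟨⟨q, [], u.length⟩, Corr.cY (by omega) (by omega),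
        Or.inr ⟨rfl, by simp [outF]⟩⟩
  | @gYN q hd =>
      subst hsrc htgt
      simp [mkTW, stFwd] at hrest
      obtain ⟨hx, hp'⟩ := hrest
      subst hp'
      obtain ⟨hy1, hy2, rfl⟩ := corr_Y_inv hc
      have hp1 : p' = u.length + 1 := rightOf_rend_inv hx
      subst hp1
      have hcn := Corr.cN (P := P) (u := u) (q := q) (h := u.length + 1)
        (by omega) (by omega)
      simp only [Nat.add_sub_cancel] at hcn
      exact ⟨⟨q, [], u.length⟩, hcn, Or.inr ⟨rfl, by simp [outF]⟩⟩
  | @gFF σ =>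
      subst hsrc htgt
      simp [mkTW, stFwd] at hrest
      obtain ⟨hx, hp'⟩ := hrest
      subst hp'
      obtain ⟨hf1, hf2, rfl⟩ := corr_F_inv hc
      obtain ⟨h1, h2, _⟩ := rightOf_letter_inv hx
      exact ⟨⟨P.qfin, [], 0⟩, Corr.cF (by omega) (by omega),
        Or.inr ⟨rfl, by simp [outF]⟩⟩
  | gFE =>
      subst hsrc htgt
      simp [mkTW, stFwd] at hrest
      obtain ⟨hx, hp'⟩ := hrest
      subst hp'
      obtain ⟨hf1, hf2, rfl⟩ := corr_F_inv hc
      have hp1 : p = u.length + 1 := rightOf_rend_inv hx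
      subst hp1
      exact ⟨⟨P.qfin, [], 0⟩, Corr.cFin, Or.inr ⟨rfl, by simp [outF]⟩⟩
  | @gSP q σ hd hqi hqf =>
      subst hsrc htgt
      simp [mkTW, stFwd] at hrest
      obtain ⟨hp1, hx, hp'⟩ := hrest
      subst hp'
      obtain ⟨hs1, hs2, rfl⟩ := corr_S_inv hc
      exact ⟨⟨q, [], p'⟩, Corr.cP hs2, Or.inr ⟨rfl, by simp [outF]⟩⟩
  | @gSP' q hd hqi hqf =>
      subst hsrc htgt
      simp [mkTW, stFwd] at hrest
      obtain ⟨hp1, hx, hp'⟩ := hrest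
      subst hp'
      obtain ⟨hs1, hs2, rfl⟩ := corr_S_inv hc
      exact ⟨⟨q, [], p'⟩, Corr.cP hs2, Or.inr ⟨rfl, by simp [outF]⟩⟩

lemma bwdRun (hw : P.WF) {v : List Gm} {C E : St Q × ℕ}
    (hr : (mkTW P).Run u C E v) :
    E = (.pos P.qfin, u.length + 2) → ∀ D, Corr P u C D →
    P.Run u D ⟨P.qfin, [], 0⟩ v := by
  induction hr with
  | refl C =>
      intro hE D hc
      subst hE
      rcases corr_pos_inv hc with ⟨hple, rfl⟩ | ⟨hpe, rfl⟩ | ⟨hqf2, hpe, rfl⟩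
      · omega
      · omega
      · exact PT.Run.refl _
  | @step C1 C2 C3 t w hs hrest ih =>
      intro hE D hc
      obtain ⟨D', hcorr', hstep⟩ := bwdStep hw hs hc
      rcases hstep with ⟨tp, hpstep, hout⟩ | ⟨rfl, hout⟩
      · have := PT.Run.step tp hpstep (ih hE D' hcorr')
        rw [hout] at this
        exact this
      · have := ih hE D' hcorr'
        have hμ : (mkTW P).μ t = [] := hout
        rw [hμ, List.nil_append]
        exact this

end ZeroPeb5

section ZeroPeb6

variable {Q Sg Gm : Type} {P : PT Q Sg Gm 0} {u : List Sg}

/-! ### finiteness -/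

def stIdx : St Q → Option (Q × Fin 6)
  | .pos q => some (q, 0)
  | .neg q => some (q, 1)
  | .gS q => some (q, 2)
  | .gB q => some (q, 3)
  | .gV q => some (q, 4)
  | .gY q => some (q, 5)
  | .gF => none

lemma stIdx_injective : Function.Injective (stIdx (Q := Q)) := by
  intro a b hab
  cases a <;> cases b <;> simp_all [stIdx] <;> omega

def twlIdx : TWLetter Sg → Option (Option Sg)
  | .lend => none
  | .rend => some none
  | .letter σ => some (some σ)

lemma twlIdx_injective : Function.Injective (twlIdx (Sg := Sg)) := by
  intro a b hab
  cases a <;> cases b <;> simp_all [twlIdx]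

instance finite_option {α : Type} [Finite α] : Finite (Option α) :=
  Finite.of_equiv _ (Equiv.optionEquivSumPUnit.{0,0} α).symm

lemma twtrans_finite [Finite Q] [Finite Sg] : Finite (TWTrans (St Q) Sg) := by
  have h1 : Finite (St Q) := Finite.of_injective _ stIdx_injective
  have h2 : Finite (TWLetter Sg) := Finite.of_injective _ twlIdx_injective
  exact Finite.of_injective (fun t : TWTrans (St Q) Sg => (t.src, t.letter, t.tgt))
    (by intro a b hab; cases a; cases b; simp_all)

/-! ### well-formedness of the simulating transducer -/

lemma mkTW_wf (hw : P.WF) [Finite Q] [Finite Sg] : (mkTW P).WF := by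
  have hnc : ∀ {a b : Q}, St.pos a = St.pos b → a = b := fun h => by injection h
  refine ⟨rfl, rfl, fun h => hw.2.2.1 (hnc h), ?_, ?_⟩
  · intro t ht
    have hD : Del P t := ht
    have h4 := hw.2.2.2.1
    cases hD with
    | @rPP q σ q' hm hdq hqi hd =>
        exact ⟨fun h => absurd (hnc h) hqi, fun h => (h4 _ hm).2 (hnc h),
          fun h => (h4 _ hm).1 (hnc h),
          fun h => by rw [hnc h, hw.2.1] at hd; exact absurd hd (by decide),
          fun h => TWLetter.noConfusion rfl (heq_of_eq h), fun h => TWLetter.noConfusion rfl (heq_of_eq h)⟩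
    | @rPS q σ q' hm hdq hqi hd hqf =>
        exact ⟨fun h => absurd (hnc h) hqi, fun h => St.noConfusion rfl (heq_of_eq h),
          fun h => (h4 _ hm).1 (hnc h), fun h => St.noConfusion rfl (heq_of_eq h),
          fun h => TWLetter.noConfusion rfl (heq_of_eq h), fun h => TWLetter.noConfusion rfl (heq_of_eq h)⟩
    | @rPN q σ q' hm hdq hqi hd =>
        exact ⟨fun h => absurd (hnc h) hqi, fun h => St.noConfusion rfl (heq_of_eq h),
          fun h => (h4 _ hm).1 (hnc h), fun h => St.noConfusion rfl (heq_of_eq h),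
          fun h => TWLetter.noConfusion rfl (heq_of_eq h), fun h => TWLetter.noConfusion rfl (heq_of_eq h)⟩
    | @rNP q σ q' hm hdq hd =>
        exact ⟨fun h => St.noConfusion rfl (heq_of_eq h), fun h => (h4 _ hm).2 (hnc h),
          fun h => St.noConfusion rfl (heq_of_eq h),
          fun h => by rw [hnc h, hw.2.1] at hd; exact absurd hd (by decide),
          fun h => TWLetter.noConfusion rfl (heq_of_eq h), fun h => TWLetter.noConfusion rfl (heq_of_eq h)⟩
    | @rNS q σ q' hm hdq hd hqf =>
        exact ⟨fun h => St.noConfusion rfl (heq_of_eq h), fun h => St.noConfusion rfl (heq_of_eq h),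
          fun h => St.noConfusion rfl (heq_of_eq h), fun h => St.noConfusion rfl (heq_of_eq h),
          fun h => TWLetter.noConfusion rfl (heq_of_eq h), fun h => TWLetter.noConfusion rfl (heq_of_eq h)⟩
    | @rNN q σ q' hm hdq hd =>
        exact ⟨fun h => St.noConfusion rfl (heq_of_eq h), fun h => St.noConfusion rfl (heq_of_eq h),
          fun h => St.noConfusion rfl (heq_of_eq h), fun h => St.noConfusion rfl (heq_of_eq h),
          fun h => TWLetter.noConfusion rfl (heq_of_eq h), fun h => TWLetter.noConfusion rfl (heq_of_eq h)⟩
    | @hNP q q' hm hqi hd =>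
        exact ⟨fun h => St.noConfusion rfl (heq_of_eq h), fun h => (h4 _ hm).2 (hnc h),
          fun h => St.noConfusion rfl (heq_of_eq h),
          fun h => by rw [hnc h, hw.2.1] at hd; exact absurd hd (by decide),
          fun _ => rfl, fun h => TWLetter.noConfusion rfl (heq_of_eq h)⟩
    | @hNV q q' hm hqi hd hqf =>
        exact ⟨fun h => St.noConfusion rfl (heq_of_eq h), fun h => St.noConfusion rfl (heq_of_eq h),
          fun h => St.noConfusion rfl (heq_of_eq h), fun h => St.noConfusion rfl (heq_of_eq h),
          fun _ => rfl, fun h => TWLetter.noConfusion rfl (heq_of_eq h)⟩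
    | @hNY q q' hm hqi hd =>
        exact ⟨fun h => St.noConfusion rfl (heq_of_eq h), fun h => St.noConfusion rfl (heq_of_eq h),
          fun h => St.noConfusion rfl (heq_of_eq h), fun h => St.noConfusion rfl (heq_of_eq h),
          fun _ => rfl, fun h => TWLetter.noConfusion rfl (heq_of_eq h)⟩
    | @hNF q hm hqi =>
        exact ⟨fun h => St.noConfusion rfl (heq_of_eq h), fun h => St.noConfusion rfl (heq_of_eq h),
          fun h => St.noConfusion rfl (heq_of_eq h), fun h => St.noConfusion rfl (heq_of_eq h),
          fun _ => rfl, fun h => TWLetter.noConfusion rfl (heq_of_eq h)⟩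
    | @hIP q' hm hd =>
        exact ⟨fun _ => rfl, fun h => (h4 _ hm).2 (hnc h),
          fun h => hw.2.2.1 (hnc h),
          fun h => by rw [hnc h, hw.2.1] at hd; exact absurd hd (by decide),
          fun _ => rfl, fun h => TWLetter.noConfusion rfl (heq_of_eq h)⟩
    | @hIV q' hm hd hqf =>
        exact ⟨fun _ => rfl, fun h => St.noConfusion rfl (heq_of_eq h),
          fun h => hw.2.2.1 (hnc h), fun h => St.noConfusion rfl (heq_of_eq h),
          fun _ => rfl, fun h => TWLetter.noConfusion rfl (heq_of_eq h)⟩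
    | @hIY q' hm hd =>
        exact ⟨fun _ => rfl, fun h => St.noConfusion rfl (heq_of_eq h),
          fun h => hw.2.2.1 (hnc h), fun h => St.noConfusion rfl (heq_of_eq h),
          fun _ => rfl, fun h => TWLetter.noConfusion rfl (heq_of_eq h)⟩
    | hIF hm =>
        exact ⟨fun _ => rfl, fun h => St.noConfusion rfl (heq_of_eq h),
          fun h => hw.2.2.1 (hnc h), fun h => St.noConfusion rfl (heq_of_eq h),
          fun _ => rfl, fun h => TWLetter.noConfusion rfl (heq_of_eq h)⟩
    | @gPB q hd =>
        exact ⟨fun h => by rw [hnc h, hw.1] at hd; exact absurd hd (by decide),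
          fun h => St.noConfusion rfl (heq_of_eq h),
          fun h => by rw [hnc h, hw.2.1] at hd; exact absurd hd (by decide),
          fun h => St.noConfusion rfl (heq_of_eq h),
          fun h => TWLetter.noConfusion rfl (heq_of_eq h), fun _ => Or.inr rfl⟩
    | @gBB q σ hd =>
        exact ⟨fun h => St.noConfusion rfl (heq_of_eq h), fun h => St.noConfusion rfl (heq_of_eq h),
          fun h => St.noConfusion rfl (heq_of_eq h), fun h => St.noConfusion rfl (heq_of_eq h),
          fun h => TWLetter.noConfusion rfl (heq_of_eq h), fun h => TWLetter.noConfusion rfl (heq_of_eq h)⟩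
    | @gBV q hd =>
        exact ⟨fun h => St.noConfusion rfl (heq_of_eq h), fun h => St.noConfusion rfl (heq_of_eq h),
          fun h => St.noConfusion rfl (heq_of_eq h), fun h => St.noConfusion rfl (heq_of_eq h),
          fun _ => rfl, fun h => TWLetter.noConfusion rfl (heq_of_eq h)⟩
    | @gVN q σ hd hqi hqf =>
        exact ⟨fun h => St.noConfusion rfl (heq_of_eq h), fun h => St.noConfusion rfl (heq_of_eq h),
          fun h => St.noConfusion rfl (heq_of_eq h), fun h => St.noConfusion rfl (heq_of_eq h),
          fun h => TWLetter.noConfusion rfl (heq_of_eq h), fun h => TWLetter.noConfusion rfl (heq_of_eq h)⟩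
    | @gVN' q hd hqi hqf =>
        exact ⟨fun h => St.noConfusion rfl (heq_of_eq h), fun h => St.noConfusion rfl (heq_of_eq h),
          fun h => St.noConfusion rfl (heq_of_eq h), fun h => St.noConfusion rfl (heq_of_eq h),
          fun h => TWLetter.noConfusion rfl (heq_of_eq h), fun _ => Or.inr rfl⟩
    | @gYY q σ hd =>
        exact ⟨fun h => St.noConfusion rfl (heq_of_eq h), fun h => St.noConfusion rfl (heq_of_eq h),
          fun h => St.noConfusion rfl (heq_of_eq h), fun h => St.noConfusion rfl (heq_of_eq h),
          fun h => TWLetter.noConfusion rfl (heq_of_eq h), fun h => TWLetter.noConfusion rfl (heq_of_eq h)⟩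
    | @gYN q hd =>
        exact ⟨fun h => St.noConfusion rfl (heq_of_eq h), fun h => St.noConfusion rfl (heq_of_eq h),
          fun h => St.noConfusion rfl (heq_of_eq h), fun h => St.noConfusion rfl (heq_of_eq h),
          fun h => TWLetter.noConfusion rfl (heq_of_eq h), fun _ => Or.inr rfl⟩
    | @gFF σ =>
        exact ⟨fun h => St.noConfusion rfl (heq_of_eq h), fun h => St.noConfusion rfl (heq_of_eq h),
          fun h => St.noConfusion rfl (heq_of_eq h), fun h => St.noConfusion rfl (heq_of_eq h),
          fun h => TWLetter.noConfusion rfl (heq_of_eq h), fun h => TWLetter.noConfusion rfl (heq_of_eq h)⟩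
    | gFE =>
        exact ⟨fun h => St.noConfusion rfl (heq_of_eq h), fun h => hw.2.2.1 (hnc h).symm,
          fun h => St.noConfusion rfl (heq_of_eq h), fun _ => rfl,
          fun h => TWLetter.noConfusion rfl (heq_of_eq h), fun _ => Or.inl rfl⟩
    | @gSP q σ hd hqi hqf =>
        exact ⟨fun h => St.noConfusion rfl (heq_of_eq h), fun h => hqi (hnc h),
          fun h => St.noConfusion rfl (heq_of_eq h), fun h => absurd (hnc h) hqf,
          fun h => TWLetter.noConfusion rfl (heq_of_eq h), fun h => TWLetter.noConfusion rfl (heq_of_eq h)⟩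
    | @gSP' q hd hqi hqf =>
        exact ⟨fun h => St.noConfusion rfl (heq_of_eq h), fun h => hqi (hnc h),
          fun h => St.noConfusion rfl (heq_of_eq h), fun h => absurd (hnc h) hqf,
          fun _ => rfl, fun h => TWLetter.noConfusion rfl (heq_of_eq h)⟩
  · have := twtrans_finite (Q := Q) (Sg := Sg)
    exact Set.toFinite _

/-! ### semantics equality -/

lemma mkTW_sem (hw : P.WF) : (mkTW P).Sem = P.Sem := by
  ext ⟨u, v⟩
  constructor
  · intro hT
    exact bwdRun hw hT rfl ⟨P.qinit, [], 0⟩ (Corr.cP (by omega))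
  · intro hP
    have := fwdRun hw hP rfl rfl (by simp) hw.2.2.1 (fun _ => rfl)
    rw [rep_qinit] at this
    exact this

end ZeroPeb6

section ZeroPeb7

variable {Q Sg Gm : Type} {P : PT Q Sg Gm 0} {u : List Sg}

lemma twext {a b : TWTrans (St Q) Sg} (h1 : a.src = b.src) (h2 : a.letter = b.letter)
    (h3 : a.tgt = b.tgt) : a = b := by
  cases a; cases b; cases h1; cases h2; cases h3; rfl

lemma step_letter_fwd {t : TWTrans (St Q) Sg} {C C'} (hs : (mkTW P).StepT u t C C')
    (hb : stFwd t.src = true) :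
    rightOf u C.2 = some t.letter ∧ C'.2 = (if stFwd t.tgt = true then C.2 + 1 else C.2) := by
  obtain ⟨_, _, _, hrest⟩ := hs
  rw [show (mkTW P).fwd = stFwd from rfl, if_pos hb] at hrest
  exact hrest

lemma step_letter_bwd {t : TWTrans (St Q) Sg} {C C'} (hs : (mkTW P).StepT u t C C')
    (hb : stFwd t.src = false) :
    1 ≤ C.2 ∧ rightOf u (C.2 - 1) = some t.letter ∧
      C'.2 = (if stFwd t.tgt = true then C.2 else C.2 - 1) := by
  obtain ⟨_, _, _, hrest⟩ := hs
  rw [show (mkTW P).fwd = stFwd from rfl, if_neg (by rw [hb]; simp)] at hrest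
  exact hrest

lemma revstep_letter_fwd {t : TWTrans (St Q) Sg} {C C'} (hs : (mkTW P).StepT u t C C')
    (hb : stFwd t.tgt = true) :
    1 ≤ C'.2 ∧ rightOf u (C'.2 - 1) = some t.letter := by
  rcases hbs : stFwd t.src with _ | _
  · obtain ⟨h1, h2, h3⟩ := step_letter_bwd hs hbs
    rw [if_pos hb] at h3
    rw [h3]
    exact ⟨h1, by simpa using h2⟩
  · obtain ⟨h2, h3⟩ := step_letter_fwd hs hbs
    rw [if_pos hb] at h3
    rw [h3]
    exact ⟨by omega, by simpa using h2⟩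

lemma revstep_letter_bwd {t : TWTrans (St Q) Sg} {C C'} (hs : (mkTW P).StepT u t C C')
    (hb : stFwd t.tgt = false) :
    rightOf u C'.2 = some t.letter := by
  rcases hbs : stFwd t.src with _ | _
  · obtain ⟨h1, h2, h3⟩ := step_letter_bwd hs hbs
    rw [if_neg (by rw [hb]; simp)] at h3
    rw [h3]
    exact h2
  · obtain ⟨h2, h3⟩ := step_letter_fwd hs hbs
    rw [if_neg (by rw [hb]; simp)] at h3
    rw [h3]
    exact h2

lemma pebTgtEq (hdet : P.Deterministic) {q : Q} {a : Option Sg} {q₁' q₂' : Q}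
    (hm₁ : P.Mem q a q₁') (hm₂ : P.Mem q a q₂') {h : ℕ} (hh : h ≤ u.length)
    (hl : letterAt u h = a) : q₁' = q₂' :=
  congrArg PTrans.tgt (hdet u _ _ ⟨q, [], h⟩
    ⟨_, mkPStep hm₁ hh hl rfl⟩ ⟨_, mkPStep hm₂ hh hl rfl⟩)

lemma pebSrcEq (hrev : P.RevDeterministic) {p₁ p₂ : Q} {a : Option Sg} {q' : Q}
    (hm₁ : P.Mem p₁ a q') (hm₂ : P.Mem p₂ a q') {h : ℕ} (hh : h ≤ u.length)
    (hl : letterAt u h = a) : p₁ = p₂ :=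
  congrArg PTrans.src (hrev u _ _ ⟨q', [], nextHead u.length h (P.dir q')⟩
    ⟨_, mkPStep hm₁ hh hl rfl⟩ ⟨_, mkPStep hm₂ hh hl rfl⟩)

/-! ### inversion lemmas by source -/

lemma detPosL {t : TWTrans (St Q) Sg} (hD : Del P t) {q : Q} {σ : Sg}
    (hs : t.src = .pos q) (hl : t.letter = .letter σ) :
    ∃ q', P.Mem q (some σ) q' ∧
      ((P.dir q' = .pos ∧ t.tgt = .pos q') ∨
       (P.dir q' = 0 ∧ q' ≠ P.qfin ∧ t.tgt = .gS q') ∨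
       (P.dir q' = .neg ∧ t.tgt = .neg q')) := by
  cases hD
  all_goals try exact St.noConfusion rfl (heq_of_eq hs)
  all_goals try exact TWLetter.noConfusion rfl (heq_of_eq hl)
  case rPP q0 σ0 q0' hm hdq hqi hd =>
    injection hs with h1; injection hl with h2; subst h1; subst h2
    exact ⟨q0', hm, Or.inl ⟨hd, rfl⟩⟩
  case rPS q0 σ0 q0' hm hdq hqi hd hqf =>
    injection hs with h1; injection hl with h2; subst h1; subst h2
    exact ⟨q0', hm, Or.inr (Or.inl ⟨hd, hqf, rfl⟩)⟩
  case rPN q0 σ0 q0' hm hdq hqi hd =>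
    injection hs with h1; injection hl with h2; subst h1; subst h2
    exact ⟨q0', hm, Or.inr (Or.inr ⟨hd, rfl⟩)⟩

lemma detPosLend {t : TWTrans (St Q) Sg} (hD : Del P t) {q : Q}
    (hs : t.src = .pos q) (hl : t.letter = .lend) :
    ∃ q', P.Mem P.qinit none q' ∧
      ((P.dir q' = .pos ∧ t.tgt = .pos q') ∨
       (P.dir q' = 0 ∧ q' ≠ P.qfin ∧ t.tgt = .gV q') ∨
       (P.dir q' = .neg ∧ t.tgt = .gY q') ∨
       (q' = P.qfin ∧ t.tgt = .gF)) := by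
  cases hD
  all_goals try exact St.noConfusion rfl (heq_of_eq hs)
  all_goals try exact TWLetter.noConfusion rfl (heq_of_eq hl)
  case hIP q0' hm hd => exact ⟨q0', hm, Or.inl ⟨hd, rfl⟩⟩
  case hIV q0' hm hd hqf => exact ⟨q0', hm, Or.inr (Or.inl ⟨hd, hqf, rfl⟩)⟩
  case hIY q0' hm hd => exact ⟨q0', hm, Or.inr (Or.inr (Or.inl ⟨hd, rfl⟩))⟩
  case hIF hm => exact ⟨P.qfin, hm, Or.inr (Or.inr (Or.inr ⟨rfl, rfl⟩))⟩

lemma detPosRend {t : TWTrans (St Q) Sg} (hD : Del P t) {q : Q}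
    (hs : t.src = .pos q) (hl : t.letter = .rend) : t.tgt = .gB q := by
  cases hD
  all_goals try exact St.noConfusion rfl (heq_of_eq hs)
  all_goals try exact TWLetter.noConfusion rfl (heq_of_eq hl)
  case gPB q0 hd =>
    injection hs with h1; subst h1; rfl

lemma detNegL {t : TWTrans (St Q) Sg} (hD : Del P t) {q : Q} {σ : Sg}
    (hs : t.src = .neg q) (hl : t.letter = .letter σ) :
    ∃ q', P.Mem q (some σ) q' ∧
      ((P.dir q' = .pos ∧ t.tgt = .pos q') ∨
       (P.dir q' = 0 ∧ q' ≠ P.qfin ∧ t.tgt = .gS q') ∨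
       (P.dir q' = .neg ∧ t.tgt = .neg q')) := by
  cases hD
  all_goals try exact St.noConfusion rfl (heq_of_eq hs)
  all_goals try exact TWLetter.noConfusion rfl (heq_of_eq hl)
  case rNP q0 σ0 q0' hm hdq hd =>
    injection hs with h1; injection hl with h2; subst h1; subst h2
    exact ⟨q0', hm, Or.inl ⟨hd, rfl⟩⟩
  case rNS q0 σ0 q0' hm hdq hd hqf =>
    injection hs with h1; injection hl with h2; subst h1; subst h2
    exact ⟨q0', hm, Or.inr (Or.inl ⟨hd, hqf, rfl⟩)⟩
  case rNN q0 σ0 q0' hm hdq hd =>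
    injection hs with h1; injection hl with h2; subst h1; subst h2
    exact ⟨q0', hm, Or.inr (Or.inr ⟨hd, rfl⟩)⟩

lemma detNegLend {t : TWTrans (St Q) Sg} (hD : Del P t) {q : Q}
    (hs : t.src = .neg q) (hl : t.letter = .lend) :
    ∃ q', P.Mem q none q' ∧
      ((P.dir q' = .pos ∧ t.tgt = .pos q') ∨
       (P.dir q' = 0 ∧ q' ≠ P.qfin ∧ t.tgt = .gV q') ∨
       (P.dir q' = .neg ∧ t.tgt = .gY q') ∨
       (q' = P.qfin ∧ t.tgt = .gF)) := by
  cases hD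
  all_goals try exact St.noConfusion rfl (heq_of_eq hs)
  all_goals try exact TWLetter.noConfusion rfl (heq_of_eq hl)
  case hNP q0 q0' hm hqi hd =>
    injection hs with h1; subst h1
    exact ⟨q0', hm, Or.inl ⟨hd, rfl⟩⟩
  case hNV q0 q0' hm hqi hd hqf =>
    injection hs with h1; subst h1
    exact ⟨q0', hm, Or.inr (Or.inl ⟨hd, hqf, rfl⟩)⟩
  case hNY q0 q0' hm hqi hd =>
    injection hs with h1; subst h1
    exact ⟨q0', hm, Or.inr (Or.inr (Or.inl ⟨hd, rfl⟩))⟩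
  case hNF q0 hm hqi =>
    injection hs with h1; subst h1
    exact ⟨P.qfin, hm, Or.inr (Or.inr (Or.inr ⟨rfl, rfl⟩))⟩

lemma detNegRend {t : TWTrans (St Q) Sg} (hD : Del P t) {q : Q}
    (hs : t.src = .neg q) (hl : t.letter = .rend) : False := by
  cases hD
  all_goals try exact St.noConfusion rfl (heq_of_eq hs)
  all_goals exact TWLetter.noConfusion rfl (heq_of_eq hl)

lemma detGS {t : TWTrans (St Q) Sg} (hD : Del P t) {q : Q}
    (hs : t.src = .gS q) : t.tgt = .pos q := by
  cases hD
  all_goals try exact St.noConfusion rfl (heq_of_eq hs)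
  case gSP q0 σ0 hd hqi hqf => injection hs with h1; subst h1; rfl
  case gSP' q0 hd hqi hqf => injection hs with h1; subst h1; rfl

lemma detGB {t : TWTrans (St Q) Sg} (hD : Del P t) {q : Q}
    (hs : t.src = .gB q) :
    (∃ σ, t.letter = .letter σ ∧ t.tgt = .gB q) ∨ (t.letter = .lend ∧ t.tgt = .gV q) := by
  cases hD
  all_goals try exact St.noConfusion rfl (heq_of_eq hs)
  case gBB q0 σ0 hd => injection hs with h1; subst h1; exact Or.inl ⟨σ0, rfl, rfl⟩
  case gBV q0 hd => injection hs with h1; subst h1; exact Or.inr ⟨rfl, rfl⟩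

lemma detGV {t : TWTrans (St Q) Sg} (hD : Del P t) {q : Q}
    (hs : t.src = .gV q) : t.tgt = .neg q := by
  cases hD
  all_goals try exact St.noConfusion rfl (heq_of_eq hs)
  case gVN q0 σ0 hd hqi hqf => injection hs with h1; subst h1; rfl
  case gVN' q0 hd hqi hqf => injection hs with h1; subst h1; rfl

lemma detGY {t : TWTrans (St Q) Sg} (hD : Del P t) {q : Q}
    (hs : t.src = .gY q) :
    (∃ σ, t.letter = .letter σ ∧ t.tgt = .gY q) ∨ (t.letter = .rend ∧ t.tgt = .neg q) := by
  cases hD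
  all_goals try exact St.noConfusion rfl (heq_of_eq hs)
  case gYY q0 σ0 hd => injection hs with h1; subst h1; exact Or.inl ⟨σ0, rfl, rfl⟩
  case gYN q0 hd => injection hs with h1; subst h1; exact Or.inr ⟨rfl, rfl⟩

lemma detGF {t : TWTrans (St Q) Sg} (hD : Del P t)
    (hs : t.src = .gF) :
    (∃ σ, t.letter = .letter σ ∧ t.tgt = .gF) ∨
      (t.letter = .rend ∧ t.tgt = .pos P.qfin) := by
  cases hD
  all_goals try exact St.noConfusion rfl (heq_of_eq hs)
  case gFF σ0 => exact Or.inl ⟨σ0, rfl, rfl⟩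
  case gFE => exact Or.inr ⟨rfl, rfl⟩

/-! ### inversion lemmas by target -/

lemma revPos {t : TWTrans (St Q) Sg} (hD : Del P t) {q' : Q}
    (hs : t.tgt = .pos q') :
    (P.dir q' = .pos ∧
      ((∃ p σ, t.letter = .letter σ ∧ P.Mem p (some σ) q' ∧
         ((P.dir p ≠ .neg ∧ t.src = .pos p) ∨ (P.dir p = .neg ∧ t.src = .neg p))) ∨
       (∃ p, t.letter = .lend ∧ P.Mem p none q' ∧
         ((p ≠ P.qinit ∧ t.src = .neg p) ∨ (p = P.qinit ∧ t.src = .pos P.qinit))))) ∨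
    (P.dir q' = 0 ∧ q' ≠ P.qfin ∧ t.src = .gS q') ∨
    (q' = P.qfin ∧ t.letter = .rend ∧ t.src = .gF) := by
  cases hD
  all_goals try exact St.noConfusion rfl (heq_of_eq hs)
  case rPP q0 σ0 q0' hm hdq hqi hd =>
    injection hs with h1; subst h1
    exact Or.inl ⟨hd, Or.inl ⟨q0, σ0, rfl, hm, Or.inl ⟨hdq, rfl⟩⟩⟩
  case rNP q0 σ0 q0' hm hdq hd =>
    injection hs with h1; subst h1
    exact Or.inl ⟨hd, Or.inl ⟨q0, σ0, rfl, hm, Or.inr ⟨hdq, rfl⟩⟩⟩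
  case hNP q0 q0' hm hqi hd =>
    injection hs with h1; subst h1
    exact Or.inl ⟨hd, Or.inr ⟨q0, rfl, hm, Or.inl ⟨hqi, rfl⟩⟩⟩
  case hIP q0' hm hd =>
    injection hs with h1; subst h1
    exact Or.inl ⟨hd, Or.inr ⟨P.qinit, rfl, hm, Or.inr ⟨rfl, rfl⟩⟩⟩
  case gFE =>
    injection hs with h1; subst h1
    exact Or.inr (Or.inr ⟨rfl, rfl, rfl⟩)
  case gSP q0 σ0 hd hqi hqf =>
    injection hs with h1; subst h1
    exact Or.inr (Or.inl ⟨hd, hqf, rfl⟩)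
  case gSP' q0 hd hqi hqf =>
    injection hs with h1; subst h1
    exact Or.inr (Or.inl ⟨hd, hqf, rfl⟩)

lemma revNeg {t : TWTrans (St Q) Sg} (hD : Del P t) {q' : Q}
    (hs : t.tgt = .neg q') :
    (P.dir q' = .neg ∧ ∃ p σ, t.letter = .letter σ ∧ P.Mem p (some σ) q' ∧
       ((P.dir p ≠ .neg ∧ t.src = .pos p) ∨ (P.dir p = .neg ∧ t.src = .neg p))) ∨
    (P.dir q' ≠ .neg ∧ t.src = .gV q') ∨
    (P.dir q' = .neg ∧ t.letter = .rend ∧ t.src = .gY q') := by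
  cases hD
  all_goals try exact St.noConfusion rfl (heq_of_eq hs)
  case rPN q0 σ0 q0' hm hdq hqi hd =>
    injection hs with h1; subst h1
    exact Or.inl ⟨hd, q0, σ0, rfl, hm, Or.inl ⟨hdq, rfl⟩⟩
  case rNN q0 σ0 q0' hm hdq hd =>
    injection hs with h1; subst h1
    exact Or.inl ⟨hd, q0, σ0, rfl, hm, Or.inr ⟨hdq, rfl⟩⟩
  case gVN q0 σ0 hd hqi hqf =>
    injection hs with h1; subst h1
    exact Or.inr (Or.inl ⟨hd, rfl⟩)
  case gVN' q0 hd hqi hqf =>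
    injection hs with h1; subst h1
    exact Or.inr (Or.inl ⟨hd, rfl⟩)
  case gYN q0 hd =>
    injection hs with h1; subst h1
    exact Or.inr (Or.inr ⟨hd, rfl, rfl⟩)

lemma revGS {t : TWTrans (St Q) Sg} (hD : Del P t) {q' : Q}
    (hs : t.tgt = .gS q') :
    ∃ p σ, t.letter = .letter σ ∧ P.Mem p (some σ) q' ∧
      ((P.dir p ≠ .neg ∧ t.src = .pos p) ∨ (P.dir p = .neg ∧ t.src = .neg p)) := by
  cases hD
  all_goals try exact St.noConfusion rfl (heq_of_eq hs)
  case rPS q0 σ0 q0' hm hdq hqi hd hqf =>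
    injection hs with h1; subst h1
    exact ⟨q0, σ0, rfl, hm, Or.inl ⟨hdq, rfl⟩⟩
  case rNS q0 σ0 q0' hm hdq hd hqf =>
    injection hs with h1; subst h1
    exact ⟨q0, σ0, rfl, hm, Or.inr ⟨hdq, rfl⟩⟩

lemma revGV {t : TWTrans (St Q) Sg} (hD : Del P t) {q' : Q}
    (hs : t.tgt = .gV q') :
    (P.dir q' = 0 ∧ ∃ p, t.letter = .lend ∧ P.Mem p none q' ∧
       ((p ≠ P.qinit ∧ t.src = .neg p) ∨ (p = P.qinit ∧ t.src = .pos P.qinit))) ∨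
    (P.dir q' = .pos ∧ t.letter = .lend ∧ t.src = .gB q') := by
  cases hD
  all_goals try exact St.noConfusion rfl (heq_of_eq hs)
  case hNV q0 q0' hm hqi hd hqf =>
    injection hs with h1; subst h1
    exact Or.inl ⟨hd, q0, rfl, hm, Or.inl ⟨hqi, rfl⟩⟩
  case hIV q0' hm hd hqf =>
    injection hs with h1; subst h1
    exact Or.inl ⟨hd, P.qinit, rfl, hm, Or.inr ⟨rfl, rfl⟩⟩
  case gBV q0 hd =>
    injection hs with h1; subst h1
    exact Or.inr ⟨hd, rfl, rfl⟩

lemma revGY {t : TWTrans (St Q) Sg} (hD : Del P t) {q' : Q}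
    (hs : t.tgt = .gY q') :
    (∃ p, t.letter = .lend ∧ P.Mem p none q' ∧
       ((p ≠ P.qinit ∧ t.src = .neg p) ∨ (p = P.qinit ∧ t.src = .pos P.qinit))) ∨
    (∃ σ, t.letter = .letter σ ∧ t.src = .gY q') := by
  cases hD
  all_goals try exact St.noConfusion rfl (heq_of_eq hs)
  case hNY q0 q0' hm hqi hd =>
    injection hs with h1; subst h1
    exact Or.inl ⟨q0, rfl, hm, Or.inl ⟨hqi, rfl⟩⟩
  case hIY q0' hm hd =>
    injection hs with h1; subst h1
    exact Or.inl ⟨P.qinit, rfl, hm, Or.inr ⟨rfl, rfl⟩⟩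
  case gYY q0 σ0 hd =>
    injection hs with h1; subst h1
    exact Or.inr ⟨σ0, rfl, rfl⟩

lemma revGB {t : TWTrans (St Q) Sg} (hD : Del P t) {q' : Q}
    (hs : t.tgt = .gB q') :
    (t.letter = .rend ∧ t.src = .pos q') ∨ (∃ σ, t.letter = .letter σ ∧ t.src = .gB q') := by
  cases hD
  all_goals try exact St.noConfusion rfl (heq_of_eq hs)
  case gPB q0 hd =>
    injection hs with h1; subst h1
    exact Or.inl ⟨rfl, rfl⟩
  case gBB q0 σ0 hd =>
    injection hs with h1; subst h1
    exact Or.inr ⟨σ0, rfl, rfl⟩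

lemma revGF {t : TWTrans (St Q) Sg} (hD : Del P t)
    (hs : t.tgt = .gF) :
    (∃ p, t.letter = .lend ∧ P.Mem p none P.qfin ∧
       ((p ≠ P.qinit ∧ t.src = .neg p) ∨ (p = P.qinit ∧ t.src = .pos P.qinit))) ∨
    (∃ σ, t.letter = .letter σ ∧ t.src = .gF) := by
  cases hD
  all_goals try exact St.noConfusion rfl (heq_of_eq hs)
  case hNF q0 hm hqi => exact Or.inl ⟨q0, rfl, hm, Or.inl ⟨hqi, rfl⟩⟩
  case hIF hm => exact Or.inl ⟨P.qinit, rfl, hm, Or.inr ⟨rfl, rfl⟩⟩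
  case gFF σ0 => exact Or.inr ⟨σ0, rfl, rfl⟩

end ZeroPeb7

section ZeroPeb8

variable {Q Sg Gm : Type} {P : PT Q Sg Gm 0} {u : List Sg}

lemma resolveTgt3 {q' : Q} {t₁ t₂ : TWTrans (St Q) Sg}
    (w₁ : (P.dir q' = .pos ∧ t₁.tgt = .pos q') ∨
       (P.dir q' = 0 ∧ q' ≠ P.qfin ∧ t₁.tgt = .gS q') ∨
       (P.dir q' = .neg ∧ t₁.tgt = .neg q'))
    (w₂ : (P.dir q' = .pos ∧ t₂.tgt = .pos q') ∨
       (P.dir q' = 0 ∧ q' ≠ P.qfin ∧ t₂.tgt = .gS q') ∨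
       (P.dir q' = .neg ∧ t₂.tgt = .neg q')) : t₁.tgt = t₂.tgt := by
  rcases w₁ with ⟨e, f₁⟩ | ⟨e, g, f₁⟩ | ⟨e, f₁⟩ <;>
    rcases w₂ with ⟨e', f₂⟩ | ⟨e', g', f₂⟩ | ⟨e', f₂⟩ <;>
    first
      | exact f₁.trans f₂.symm
      | (rw [e] at e'; exact absurd e' (by decide))
      | (rw [e'] at e; exact absurd e (by decide))

lemma resolveTgt4 (hw : P.WF) {q' : Q} {t₁ t₂ : TWTrans (St Q) Sg}
    (w₁ : (P.dir q' = .pos ∧ t₁.tgt = .pos q') ∨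
       (P.dir q' = 0 ∧ q' ≠ P.qfin ∧ t₁.tgt = .gV q') ∨
       (P.dir q' = .neg ∧ t₁.tgt = .gY q') ∨ (q' = P.qfin ∧ t₁.tgt = .gF))
    (w₂ : (P.dir q' = .pos ∧ t₂.tgt = .pos q') ∨
       (P.dir q' = 0 ∧ q' ≠ P.qfin ∧ t₂.tgt = .gV q') ∨
       (P.dir q' = .neg ∧ t₂.tgt = .gY q') ∨ (q' = P.qfin ∧ t₂.tgt = .gF)) :
    t₁.tgt = t₂.tgt := by
  rcases w₁ with ⟨e, f₁⟩ | ⟨e, g, f₁⟩ | ⟨e, f₁⟩ | ⟨e, f₁⟩ <;>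
    rcases w₂ with ⟨e', f₂⟩ | ⟨e', g', f₂⟩ | ⟨e', f₂⟩ | ⟨e', f₂⟩ <;>
    first
      | exact f₁.trans f₂.symm
      | (rw [e] at e'; exact absurd e' (by decide))
      | (rw [e'] at e; exact absurd e (by decide))
      | (exact absurd e' g)
      | (exact absurd e g')
      | (rw [e', hw.2.1] at e; exact absurd e (by decide))
      | (rw [e, hw.2.1] at e'; exact absurd e' (by decide))

lemma resolveSrc2 {p : Q} {t₁ t₂ : TWTrans (St Q) Sg}
    (sw₁ : (P.dir p ≠ .neg ∧ t₁.src = .pos p) ∨ (P.dir p = .neg ∧ t₁.src = .neg p))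
    (sw₂ : (P.dir p ≠ .neg ∧ t₂.src = .pos p) ∨ (P.dir p = .neg ∧ t₂.src = .neg p)) :
    t₁.src = t₂.src := by
  rcases sw₁ with ⟨e, f₁⟩ | ⟨e, f₁⟩ <;> rcases sw₂ with ⟨e', f₂⟩ | ⟨e', f₂⟩ <;>
    first
      | exact f₁.trans f₂.symm
      | exact absurd e' e
      | exact absurd e e'

lemma resolveSrc2' {p : Q} {t₁ t₂ : TWTrans (St Q) Sg}
    (sw₁ : (p ≠ P.qinit ∧ t₁.src = .neg p) ∨ (p = P.qinit ∧ t₁.src = .pos P.qinit))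
    (sw₂ : (p ≠ P.qinit ∧ t₂.src = .neg p) ∨ (p = P.qinit ∧ t₂.src = .pos P.qinit)) :
    t₁.src = t₂.src := by
  rcases sw₁ with ⟨e, f₁⟩ | ⟨e, f₁⟩ <;> rcases sw₂ with ⟨e', f₂⟩ | ⟨e', f₂⟩ <;>
    first
      | exact f₁.trans f₂.symm
      | exact absurd e' e
      | exact absurd e e'

lemma mkTW_det (hw : P.WF) (hdet : P.Deterministic) : (mkTW P).Deterministic := by
  intro u t₁ t₂ C h₁ h₂
  obtain ⟨C₁, s₁⟩ := h₁
  obtain ⟨C₂, s₂⟩ := h₂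
  have d₁ : Del P t₁ := s₁.1
  have d₂ : Del P t₂ := s₂.1
  obtain ⟨c, p⟩ := C
  have e₁ : t₁.src = c := s₁.2.1.symm
  have e₂ : t₂.src = c := s₂.2.1.symm
  have hsrc : t₁.src = t₂.src := e₁.trans e₂.symm
  cases c with
  | pos q =>
      have hx₁ := (step_letter_fwd s₁ (by rw [e₁]; rfl)).1
      have hx₂ := (step_letter_fwd s₂ (by rw [e₂]; rfl)).1
      have hlet : t₁.letter = t₂.letter := Option.some.inj (hx₁.symm.trans hx₂)
      have hl₂of : ∀ {x}, t₁.letter = x → t₂.letter = x := fun h => hlet.symm.trans h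
      rcases hl : t₁.letter with _ | _ | σ
      · obtain ⟨q₁', hm₁, w₁⟩ := detPosLend d₁ e₁ hl
        obtain ⟨q₂', hm₂, w₂⟩ := detPosLend d₂ e₂ (hl₂of hl)
        have hq : q₁' = q₂' := pebTgtEq hdet hm₁ hm₂ (Nat.zero_le _) (letterAt_zero u)
        subst hq
        exact twext hsrc hlet (resolveTgt4 hw w₁ w₂)
      · exact twext hsrc hlet ((detPosRend d₁ e₁ hl).trans (detPosRend d₂ e₂ (hl₂of hl)).symm)
      · obtain ⟨q₁', hm₁, w₁⟩ := detPosL d₁ e₁ hl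
        obtain ⟨q₂', hm₂, w₂⟩ := detPosL d₂ e₂ (hl₂of hl)
        rw [hl] at hx₁
        obtain ⟨hp1, hp2, hlat⟩ := rightOf_letter_inv hx₁
        have hq : q₁' = q₂' := pebTgtEq hdet hm₁ hm₂ hp2 hlat
        subst hq
        exact twext hsrc hlet (resolveTgt3 w₁ w₂)
  | neg q =>
      have hx₁ := (step_letter_bwd s₁ (by rw [e₁]; rfl)).2.1
      have hx₂ := (step_letter_bwd s₂ (by rw [e₂]; rfl)).2.1
      have hlet : t₁.letter = t₂.letter := Option.some.inj (hx₁.symm.trans hx₂)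
      have hl₂of : ∀ {x}, t₁.letter = x → t₂.letter = x := fun h => hlet.symm.trans h
      rcases hl : t₁.letter with _ | _ | σ
      · obtain ⟨q₁', hm₁, w₁⟩ := detNegLend d₁ e₁ hl
        obtain ⟨q₂', hm₂, w₂⟩ := detNegLend d₂ e₂ (hl₂of hl)
        have hq : q₁' = q₂' := pebTgtEq hdet hm₁ hm₂ (Nat.zero_le _) (letterAt_zero u)
        subst hq
        exact twext hsrc hlet (resolveTgt4 hw w₁ w₂)
      · exact (detNegRend d₁ e₁ hl).elim
      · obtain ⟨q₁', hm₁, w₁⟩ := detNegL d₁ e₁ hl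
        obtain ⟨q₂', hm₂, w₂⟩ := detNegL d₂ e₂ (hl₂of hl)
        rw [hl] at hx₁
        obtain ⟨hp1, hp2, hlat⟩ := rightOf_letter_inv hx₁
        have hq : q₁' = q₂' := pebTgtEq hdet hm₁ hm₂ hp2 hlat
        subst hq
        exact twext hsrc hlet (resolveTgt3 w₁ w₂)
  | gS q =>
      have hx₁ := (step_letter_bwd s₁ (by rw [e₁]; rfl)).2.1
      have hx₂ := (step_letter_bwd s₂ (by rw [e₂]; rfl)).2.1
      have hlet : t₁.letter = t₂.letter := Option.some.inj (hx₁.symm.trans hx₂)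
      exact twext hsrc hlet ((detGS d₁ e₁).trans (detGS d₂ e₂).symm)
  | gB q =>
      have hx₁ := (step_letter_bwd s₁ (by rw [e₁]; rfl)).2.1
      have hx₂ := (step_letter_bwd s₂ (by rw [e₂]; rfl)).2.1
      have hlet : t₁.letter = t₂.letter := Option.some.inj (hx₁.symm.trans hx₂)
      rcases detGB d₁ e₁ with ⟨σ₁, l₁, f₁⟩ | ⟨l₁, f₁⟩ <;>
        rcases detGB d₂ e₂ with ⟨σ₂, l₂, f₂⟩ | ⟨l₂, f₂⟩ <;>
        first
          | (rw [l₁, l₂] at hlet; exact TWLetter.noConfusion rfl (heq_of_eq hlet))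
          | (rw [l₁, l₂] at hlet; injection hlet with hσ; subst hσ;
             exact twext hsrc (l₁.trans l₂.symm) (f₁.trans f₂.symm))
          | exact twext hsrc (l₁.trans l₂.symm) (f₁.trans f₂.symm)
  | gV q =>
      have hx₁ := (step_letter_fwd s₁ (by rw [e₁]; rfl)).1
      have hx₂ := (step_letter_fwd s₂ (by rw [e₂]; rfl)).1
      have hlet : t₁.letter = t₂.letter := Option.some.inj (hx₁.symm.trans hx₂)
      exact twext hsrc hlet ((detGV d₁ e₁).trans (detGV d₂ e₂).symm)
  | gY q =>
      have hx₁ := (step_letter_fwd s₁ (by rw [e₁]; rfl)).1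
      have hx₂ := (step_letter_fwd s₂ (by rw [e₂]; rfl)).1
      have hlet : t₁.letter = t₂.letter := Option.some.inj (hx₁.symm.trans hx₂)
      rcases detGY d₁ e₁ with ⟨σ₁, l₁, f₁⟩ | ⟨l₁, f₁⟩ <;>
        rcases detGY d₂ e₂ with ⟨σ₂, l₂, f₂⟩ | ⟨l₂, f₂⟩ <;>
        first
          | (rw [l₁, l₂] at hlet; exact TWLetter.noConfusion rfl (heq_of_eq hlet))
          | exact twext hsrc hlet (f₁.trans f₂.symm)
  | gF =>
      have hx₁ := (step_letter_fwd s₁ (by rw [e₁]; rfl)).1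
      have hx₂ := (step_letter_fwd s₂ (by rw [e₂]; rfl)).1
      have hlet : t₁.letter = t₂.letter := Option.some.inj (hx₁.symm.trans hx₂)
      rcases detGF d₁ e₁ with ⟨σ₁, l₁, f₁⟩ | ⟨l₁, f₁⟩ <;>
        rcases detGF d₂ e₂ with ⟨σ₂, l₂, f₂⟩ | ⟨l₂, f₂⟩ <;>
        first
          | (rw [l₁, l₂] at hlet; exact TWLetter.noConfusion rfl (heq_of_eq hlet))
          | exact twext hsrc hlet (f₁.trans f₂.symm)

lemma mkTW_revdet (hw : P.WF) (hrev : P.RevDeterministic) :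
    (mkTW P).RevDeterministic := by
  intro u t₁ t₂ C' h₁ h₂
  obtain ⟨C₁, s₁⟩ := h₁
  obtain ⟨C₂, s₂⟩ := h₂
  have d₁ : Del P t₁ := s₁.1
  have d₂ : Del P t₂ := s₂.1
  obtain ⟨c, p⟩ := C'
  have e₁ : t₁.tgt = c := s₁.2.2.1.symm
  have e₂ : t₂.tgt = c := s₂.2.2.1.symm
  have htgt : t₁.tgt = t₂.tgt := e₁.trans e₂.symm
  cases c with
  | pos q' =>
      obtain ⟨hp1, hx₁⟩ := revstep_letter_fwd s₁ (by rw [e₁]; rfl)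
      obtain ⟨-, hx₂⟩ := revstep_letter_fwd s₂ (by rw [e₂]; rfl)
      have hlet : t₁.letter = t₂.letter := Option.some.inj (hx₁.symm.trans hx₂)
      rcases revPos d₁ e₁ with ⟨hd₁, wa₁⟩ | ⟨hd₁, hnf₁, f₁⟩ | ⟨ef₁, hl₁, f₁⟩ <;>
        rcases revPos d₂ e₂ with ⟨hd₂, wa₂⟩ | ⟨hd₂, hnf₂, f₂⟩ | ⟨ef₂, hl₂, f₂⟩
      · -- a-a
        rcases wa₁ with ⟨p₁, σ₁, l₁, hm₁, sw₁⟩ | ⟨p₁, l₁, hm₁, sw₁⟩ <;>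
          rcases wa₂ with ⟨p₂, σ₂, l₂, hm₂, sw₂⟩ | ⟨p₂, l₂, hm₂, sw₂⟩
        · have hσ : σ₁ = σ₂ := by
            rw [l₁, l₂] at hlet; injection hlet
          subst hσ
          rw [l₁] at hx₁
          obtain ⟨hq1, hq2, hlat⟩ := rightOf_letter_inv hx₁
          have hp : p₁ = p₂ := pebSrcEq hrev hm₁ hm₂ hq2 hlat
          subst hp
          exact twext (resolveSrc2 sw₁ sw₂) hlet htgt
        · rw [l₁, l₂] at hlet; exact TWLetter.noConfusion rfl (heq_of_eq hlet)
        · rw [l₁, l₂] at hlet; exact TWLetter.noConfusion rfl (heq_of_eq hlet)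
        · have hp : p₁ = p₂ := pebSrcEq hrev hm₁ hm₂ (Nat.zero_le _) (letterAt_zero u)
          subst hp
          exact twext (resolveSrc2' sw₁ sw₂) hlet htgt
      · rw [hd₁] at hd₂; exact absurd hd₂ (by decide)
      · rw [ef₂, hw.2.1] at hd₁; exact absurd hd₁ (by decide)
      · rw [hd₂] at hd₁; exact absurd hd₁ (by decide)
      · exact twext (f₁.trans f₂.symm) hlet htgt
      · exact absurd ef₂ hnf₁
      · rw [ef₁, hw.2.1] at hd₂; exact absurd hd₂ (by decide)
      · exact absurd ef₁ hnf₂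
      · exact twext (f₁.trans f₂.symm) hlet htgt
  | neg q' =>
      have hx₁ := revstep_letter_bwd s₁ (by rw [e₁]; rfl)
      have hx₂ := revstep_letter_bwd s₂ (by rw [e₂]; rfl)
      have hlet : t₁.letter = t₂.letter := Option.some.inj (hx₁.symm.trans hx₂)
      rcases revNeg d₁ e₁ with ⟨hd₁, p₁, σ₁, l₁, hm₁, sw₁⟩ | ⟨hd₁, f₁⟩ | ⟨hd₁, l₁, f₁⟩ <;>
        rcases revNeg d₂ e₂ with ⟨hd₂, p₂, σ₂, l₂, hm₂, sw₂⟩ | ⟨hd₂, f₂⟩ | ⟨hd₂, l₂, f₂⟩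
      · have hσ : σ₁ = σ₂ := by
          rw [l₁, l₂] at hlet; injection hlet
        subst hσ
        rw [l₁] at hx₁
        obtain ⟨hq1, hq2, hlat⟩ := rightOf_letter_inv hx₁
        have hp : p₁ = p₂ := pebSrcEq hrev hm₁ hm₂ hq2 hlat
        subst hp
        exact twext (resolveSrc2 sw₁ sw₂) hlet htgt
      · exact absurd hd₁ hd₂
      · rw [l₁, l₂] at hlet; exact TWLetter.noConfusion rfl (heq_of_eq hlet)
      · exact absurd hd₂ hd₁
      · exact twext (f₁.trans f₂.symm) hlet htgt
      · exact absurd hd₂ hd₁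
      · rw [l₁, l₂] at hlet; exact TWLetter.noConfusion rfl (heq_of_eq hlet)
      · exact absurd hd₁ hd₂
      · exact twext (f₁.trans f₂.symm) hlet htgt
  | gS q' =>
      have hx₁ := revstep_letter_bwd s₁ (by rw [e₁]; rfl)
      have hx₂ := revstep_letter_bwd s₂ (by rw [e₂]; rfl)
      have hlet : t₁.letter = t₂.letter := Option.some.inj (hx₁.symm.trans hx₂)
      obtain ⟨p₁, σ₁, l₁, hm₁, sw₁⟩ := revGS d₁ e₁
      obtain ⟨p₂, σ₂, l₂, hm₂, sw₂⟩ := revGS d₂ e₂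
      have hσ : σ₁ = σ₂ := by
        rw [l₁, l₂] at hlet; injection hlet
      subst hσ
      rw [l₁] at hx₁
      obtain ⟨hq1, hq2, hlat⟩ := rightOf_letter_inv hx₁
      have hp : p₁ = p₂ := pebSrcEq hrev hm₁ hm₂ hq2 hlat
      subst hp
      exact twext (resolveSrc2 sw₁ sw₂) hlet htgt
  | gB q' =>
      have hx₁ := revstep_letter_bwd s₁ (by rw [e₁]; rfl)
      have hx₂ := revstep_letter_bwd s₂ (by rw [e₂]; rfl)
      have hlet : t₁.letter = t₂.letter := Option.some.inj (hx₁.symm.trans hx₂)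
      rcases revGB d₁ e₁ with ⟨l₁, f₁⟩ | ⟨σ₁, l₁, f₁⟩ <;>
        rcases revGB d₂ e₂ with ⟨l₂, f₂⟩ | ⟨σ₂, l₂, f₂⟩ <;>
        first
          | (rw [l₁, l₂] at hlet; exact TWLetter.noConfusion rfl (heq_of_eq hlet))
          | exact twext (f₁.trans f₂.symm) hlet htgt
  | gV q' =>
      obtain ⟨hp1, hx₁⟩ := revstep_letter_fwd s₁ (by rw [e₁]; rfl)
      obtain ⟨-, hx₂⟩ := revstep_letter_fwd s₂ (by rw [e₂]; rfl)
      have hlet : t₁.letter = t₂.letter := Option.some.inj (hx₁.symm.trans hx₂)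
      rcases revGV d₁ e₁ with ⟨hd₁, p₁, l₁, hm₁, sw₁⟩ | ⟨hd₁, l₁, f₁⟩ <;>
        rcases revGV d₂ e₂ with ⟨hd₂, p₂, l₂, hm₂, sw₂⟩ | ⟨hd₂, l₂, f₂⟩
      · have hp : p₁ = p₂ := pebSrcEq hrev hm₁ hm₂ (Nat.zero_le _) (letterAt_zero u)
        subst hp
        exact twext (resolveSrc2' sw₁ sw₂) hlet htgt
      · rw [hd₂] at hd₁; exact absurd hd₁ (by decide)
      · rw [hd₁] at hd₂; exact absurd hd₂ (by decide)
      · exact twext (f₁.trans f₂.symm) hlet htgt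
  | gY q' =>
      obtain ⟨hp1, hx₁⟩ := revstep_letter_fwd s₁ (by rw [e₁]; rfl)
      obtain ⟨-, hx₂⟩ := revstep_letter_fwd s₂ (by rw [e₂]; rfl)
      have hlet : t₁.letter = t₂.letter := Option.some.inj (hx₁.symm.trans hx₂)
      rcases revGY d₁ e₁ with ⟨p₁, l₁, hm₁, sw₁⟩ | ⟨σ₁, l₁, f₁⟩ <;>
        rcases revGY d₂ e₂ with ⟨p₂, l₂, hm₂, sw₂⟩ | ⟨σ₂, l₂, f₂⟩
      · have hp : p₁ = p₂ := pebSrcEq hrev hm₁ hm₂ (Nat.zero_le _) (letterAt_zero u)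
        subst hp
        exact twext (resolveSrc2' sw₁ sw₂) hlet htgt
      · rw [l₁, l₂] at hlet; exact TWLetter.noConfusion rfl (heq_of_eq hlet)
      · rw [l₁, l₂] at hlet; exact TWLetter.noConfusion rfl (heq_of_eq hlet)
      · exact twext (f₁.trans f₂.symm) hlet htgt
  | gF =>
      obtain ⟨hp1, hx₁⟩ := revstep_letter_fwd s₁ (by rw [e₁]; rfl)
      obtain ⟨-, hx₂⟩ := revstep_letter_fwd s₂ (by rw [e₂]; rfl)
      have hlet : t₁.letter = t₂.letter := Option.some.inj (hx₁.symm.trans hx₂)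
      rcases revGF d₁ e₁ with ⟨p₁, l₁, hm₁, sw₁⟩ | ⟨σ₁, l₁, f₁⟩ <;>
        rcases revGF d₂ e₂ with ⟨p₂, l₂, hm₂, sw₂⟩ | ⟨σ₂, l₂, f₂⟩
      · have hp : p₁ = p₂ := pebSrcEq hrev hm₁ hm₂ (Nat.zero_le _) (letterAt_zero u)
        subst hp
        exact twext (resolveSrc2' sw₁ sw₂) hlet htgt
      · rw [l₁, l₂] at hlet; exact TWLetter.noConfusion rfl (heq_of_eq hlet)
      · rw [l₁, l₂] at hlet; exact TWLetter.noConfusion rfl (heq_of_eq hlet)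
      · exact twext (f₁.trans f₂.symm) hlet htgt

lemma mkTW_reversible (hw : P.WF) (hrev : P.Reversible) : (mkTW P).Reversible :=
  ⟨mkTW_det hw hrev.1, mkTW_revdet hw hrev.2⟩

end ZeroPeb8

/-- There is an absolute constant `c` such that every `0`-pebble transducer
`P` with `n` states is equivalent to a two-way transducer `T` with at most `c·n` states;
moreover if `P` is reversible then so is `T`. -/
theorem zero_pebble_to_two_way :
    ∃ c : ℕ,
      ∀ (Q Sg Gm : Type) (instQ : Fintype Q) (instSg : Fintype Sg)
        (P : PT Q Sg Gm 0), P.WF →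
        ∃ (Q' : Type) (instQ' : Fintype Q') (T : TW Q' Sg Gm),
          T.WF ∧
          @Fintype.card Q' instQ' ≤ c * @Fintype.card Q instQ ∧
          T.Sem = P.Sem ∧
          (P.Reversible → T.Reversible) := by
  refine ⟨7, ?_⟩
  intro Q Sg Gm instQ instSg P hw
  letI := instQ
  letI := instSg
  haveI hfinQ : Finite Q := Finite.of_fintype Q
  haveI hfinSg : Finite Sg := Finite.of_fintype Sg
  letI instSt : Fintype (St Q) := Fintype.ofInjective stIdx stIdx_injective
  refine ⟨St Q, instSt, mkTW P, mkTW_wf hw, ?_, mkTW_sem hw,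
    fun hr => mkTW_reversible hw hr⟩
  have hcard := Fintype.card_le_of_injective (stIdx (Q := Q)) stIdx_injective
  have hn : 1 ≤ Fintype.card Q := Fintype.card_pos_iff.mpr ⟨P.qinit⟩
  calc Fintype.card (St Q) ≤ Fintype.card (Option (Q × Fin 6)) := hcard
    _ = Fintype.card Q * 6 + 1 := by simp
    _ ≤ 7 * Fintype.card Q := by omega

end RevPeb
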